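/- arXiv:1603.04592 — 6 statements merged into one kernel-verified Lean document; each statement's English description precedes it below -/
import Mathlib

section
/- Let n ≥ 2 be an integer and let g(t) = (∑_{k=1}^{n} a_k t^k) − 1 be a polynomial where each a_k is a nonnegative integer, a_n ≥ 1, and the greatest common divisor of the set {k ∈ ℕ : a_k ≠ 0} is 1. Then there exists a real number r0 with 0 < r0 < 1 such that g(r0) = 0 and every complex root z of g with z ≠ r0 satisfies |z| > r0; in particular, r0 is the unique root of g having the smallest absolute value among all complex roots of g. -/
open Polynomial

private lemma re_eq_abs_imp {w : ℂ} (h : w.re = ‖w‖) : w = (w.re : ℂ) := by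
  have h2 : w.re ^ 2 = Complex.normSq w := by
    rw [h, ← Complex.sq_norm]
  have him : w.im = 0 := by
    have : w.im ^ 2 = 0 := by
      have := Complex.normSq_apply w
      nlinarith [this]
    exact pow_eq_zero_iff (n := 2) (by norm_num) |>.mp this
  exact Complex.ext (by simp) (by simp [him])

/-- Let `n ≥ 2` and `g(t) = (∑_{k=1}^n a_k t^k) - 1` with nonnegative integer
coefficients `a_k`, `a_n ≥ 1`, and `gcd {k : a_k ≠ 0} = 1`. Then there is a real `r0`,
`0 < r0 < 1`, which is a root of `g`, and every other complex root of `g` has absolute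
value strictly greater than `r0`. -/
theorem growth_denominator_has_unique_smallest_root
    (n : ℕ) (hn : 2 ≤ n) (a : ℕ → ℕ) (g : Polynomial ℤ)
    (hg : g = (∑ k ∈ Finset.Icc 1 n, C (a k : ℤ) * X ^ k) - 1)
    (han : 1 ≤ a n)
    (hgcd : ((Finset.Icc 1 n).filter fun k => a k ≠ 0).gcd id = 1) :
    ∃ r0 : ℝ, 0 < r0 ∧ r0 < 1 ∧ aeval r0 g = 0 ∧
      ∀ z : ℂ, aeval z g = 0 → z ≠ (r0 : ℂ) → (r0 : ℝ) < ‖z‖ := by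
  set F : ℝ → ℝ := fun t => ∑ k ∈ Finset.Icc 1 n, (a k : ℝ) * t ^ k with hF
  have hnmem : n ∈ Finset.Icc 1 n := Finset.mem_Icc.mpr ⟨by omega, le_refl n⟩
  -- evaluation identities
  have hevalR : ∀ t : ℝ, aeval t g = F t - 1 := by
    intro t; simp [hg, hF]
  have hevalC : ∀ z : ℂ, aeval z g = (∑ k ∈ Finset.Icc 1 n, (a k : ℂ) * z ^ k) - 1 := by
    intro z; simp [hg]
  -- strict monotonicity of F on [0, ∞)
  have hmono : ∀ s t : ℝ, 0 ≤ s → s < t → F s < F t := by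
    intro s t hs hst
    apply Finset.sum_lt_sum
    · intro k hk
      exact mul_le_mul_of_nonneg_left (pow_le_pow_left₀ hs hst.le k) (by positivity)
    · refine ⟨n, hnmem, ?_⟩
      have h1 : s ^ n < t ^ n := pow_lt_pow_left₀ hst hs (by omega)
      have h2 : (1 : ℝ) ≤ (a n : ℝ) := by exact_mod_cast han
      nlinarith
  -- F 1 ≥ 2
  have hsum2 : 2 ≤ ∑ k ∈ Finset.Icc 1 n, a k := by
    by_contra h
    have hle : ∑ k ∈ Finset.Icc 1 n, a k ≤ 1 := by omega
    have hank : ∀ k ∈ Finset.Icc 1 n, k ≠ n → a k = 0 := by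
      intro k hk hkn
      by_contra hak
      have h1 : a n + a k ≤ ∑ j ∈ Finset.Icc 1 n, a j := by
        have := Finset.add_sum_erase _ a hnmem
        have hk' : k ∈ (Finset.Icc 1 n).erase n := Finset.mem_erase.mpr ⟨hkn, hk⟩
        have := Finset.single_le_sum (f := a) (fun i _ => Nat.zero_le _) hk'
        omega
      omega
    have hfilter : (Finset.Icc 1 n).filter (fun k => a k ≠ 0) = {n} := by
      apply Finset.ext
      intro k
      simp only [Finset.mem_filter, Finset.mem_singleton]
      constructor
      · rintro ⟨hk, hak⟩
        by_contra hkn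
        exact hak (hank k hk hkn)
      · rintro rfl
        exact ⟨hnmem, by omega⟩
    rw [hfilter] at hgcd
    simp [Finset.gcd_singleton] at hgcd
    omega
  have hF1 : 2 ≤ F 1 := by
    have : F 1 = ∑ k ∈ Finset.Icc 1 n, (a k : ℝ) := by simp [hF]
    rw [this]
    push_cast [← Nat.cast_sum]
    exact_mod_cast hsum2
  -- IVT: ∃ r0 ∈ (0,1), F r0 = 1
  have hF0 : F 0 = 0 := by
    rw [hF]
    apply Finset.sum_eq_zero
    intro k hk
    have hk1 : 1 ≤ k := (Finset.mem_Icc.mp hk).1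
    simp [zero_pow (by omega : k ≠ 0)]
  have hcont : ContinuousOn F (Set.Icc 0 1) := by
    apply Continuous.continuousOn
    apply continuous_finset_sum
    intro k _
    fun_prop
  have hivt : (1 : ℝ) ∈ Set.Ioo (F 0) (F 1) := by
    rw [hF0]; constructor <;> [norm_num; linarith]
  obtain ⟨r0, hr0mem, hFr0⟩ := intermediate_value_Ioo (by norm_num) hcont hivt
  obtain ⟨hr0pos, hr0lt1⟩ := hr0mem
  refine ⟨r0, hr0pos, hr0lt1, by rw [hevalR, hFr0]; ring, ?_⟩
  -- main uniqueness part
  intro z hz hzne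
  have hzsum : (∑ k ∈ Finset.Icc 1 n, (a k : ℂ) * z ^ k) = 1 := by
    have := hevalC z
    rw [hz] at this
    linear_combination -this
  by_contra hlt
  push_neg at hlt
  -- |∑ a_k z^k| ≤ F |z|
  have habs : ‖∑ k ∈ Finset.Icc 1 n, (a k : ℂ) * z ^ k‖ ≤ F ‖z‖ := by
    refine le_trans (norm_sum_le _ _) ?_
    apply Finset.sum_le_sum
    intro k _
    simp [map_mul, map_pow, Complex.norm_natCast, hF]
  rcases lt_or_eq_of_le hlt with hltstrict | heq
  · -- |z| < r0 : strict inequality contradiction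
    have h1 : F ‖z‖ < F r0 :=
      hmono _ _ (norm_nonneg z) hltstrict
    rw [hzsum] at habs
    simp at habs
    linarith [hFr0]
  · -- |z| = r0 : equality case
    -- real parts
    have hre : (∑ k ∈ Finset.Icc 1 n, (a k : ℝ) * (z ^ k).re) = 1 := by
      have := congrArg Complex.re hzsum
      rw [Complex.re_sum] at this
      simpa using this
    have hterm_le : ∀ k ∈ Finset.Icc 1 n,
        (a k : ℝ) * (z ^ k).re ≤ (a k : ℝ) * r0 ^ k := by
      intro k _
      apply mul_le_mul_of_nonneg_left _ (by positivity)
      calc (z ^ k).re ≤ ‖z ^ k‖ := Complex.re_le_norm _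
        _ = r0 ^ k := by rw [norm_pow, ← heq]
    have hsumeq : ∑ k ∈ Finset.Icc 1 n, ((a k : ℝ) * r0 ^ k - (a k : ℝ) * (z ^ k).re) = 0 := by
      rw [Finset.sum_sub_distrib, hre]
      rw [hF] at hFr0
      linarith
    have hall := (Finset.sum_eq_zero_iff_of_nonneg
      (fun k hk => by linarith [hterm_le k hk])).mp hsumeq
    -- for each k with a k ≠ 0, z ^ k = r0 ^ k
    have hzr0 : z ≠ 0 := by
      intro h; rw [h] at heq; simp at heq; linarith
    set u : ℂ := z / (r0 : ℂ) with hu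
    have hr0ne : (r0 : ℂ) ≠ 0 := by exact_mod_cast hr0pos.ne'
    have huk : ∀ k ∈ (Finset.Icc 1 n).filter (fun k => a k ≠ 0), u ^ k = 1 := by
      intro k hk
      obtain ⟨hk1, hak⟩ := Finset.mem_filter.mp hk
      have h0 := hall k hk1
      have hakpos : (0:ℝ) < (a k : ℝ) := by
        have : 0 < a k := Nat.pos_of_ne_zero hak
        exact_mod_cast this
      have hre_eq : (z ^ k).re = r0 ^ k := by
        have : (a k : ℝ) * (r0 ^ k - (z ^ k).re) = 0 := by ring_nf; linarith [h0]
        have h2 : r0 ^ k - (z ^ k).re = 0 := by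
          rcases mul_eq_zero.mp this with h | h
          · exact absurd h hakpos.ne'
          · exact h
        linarith
      have habsk : ‖z ^ k‖ = r0 ^ k := by rw [norm_pow, heq]
      have hzk : z ^ k = ((r0 : ℂ)) ^ k := by
        have := re_eq_abs_imp (w := z ^ k) (by rw [hre_eq, habsk])
        rw [this, hre_eq]
        push_cast
        ring
      rw [hu, div_pow, hzk, div_self (pow_ne_zero _ hr0ne)]
    have hord : orderOf u ∣ ((Finset.Icc 1 n).filter fun k => a k ≠ 0).gcd id := by
      apply Finset.dvd_gcd
      intro k hk
      exact orderOf_dvd_of_pow_eq_one (huk k hk)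
    rw [hgcd] at hord
    have hu1 : u = 1 := orderOf_eq_one_iff.mp (Nat.dvd_one.mp hord)
    have : z = (r0 : ℂ) := by
      rw [hu, div_eq_one_iff_eq hr0ne] at hu1
      exact hu1
    exact hzne this
end

section
/- Let n ≥ 2 be an integer and let g(t) = (∑_{k=1}^{n} a_k t^k) − 1 be a polynomial where each a_k is a nonnegative integer, a_n ≥ 1, and the greatest common divisor of the set {k ∈ ℕ : a_k ≠ 0} is 1. Let r0 be the unique root of g of smallest absolute value (which is real with 0 < r0 < 1). Then 1/r0 is a Perron number. -/
open Polynomial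

/-- A *Perron number* is a real algebraic integer `τ > 1` such that every complex root of the
minimal polynomial of `τ` over `ℚ` other than `τ` itself has absolute value strictly less
than `τ`. -/
def IsPerronNumber (τ : ℝ) : Prop :=
  1 < τ ∧ IsIntegral ℤ τ ∧
    ∀ z : ℂ, aeval z (minpoly ℚ τ) = 0 → z ≠ (τ : ℂ) → ‖z‖ < τ

private lemma aux_eval' {K : Type*} [Field K] (n : ℕ) (a : ℕ → ℕ) (x : K) (hx : x ≠ 0) :
    x ^ n * aeval x⁻¹ ((X : ℤ[X]) ^ n - ∑ k ∈ Finset.Icc 1 n, C (a k : ℤ) * X ^ (n - k)) =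
      - aeval x ((∑ k ∈ Finset.Icc 1 n, C ((a k : ℤ)) * X ^ k) - 1) := by
  simp only [map_sub, map_sum, map_pow, map_mul, aeval_X, aeval_C, map_one, map_natCast]
  rw [mul_sub, Finset.mul_sum]
  have h1 : x ^ n * (x⁻¹) ^ n = 1 := by
    rw [← mul_pow, mul_inv_cancel₀ hx, one_pow]
  rw [h1]
  have h2 : ∀ k ∈ Finset.Icc 1 n, x ^ n * ((a k : K) * (x⁻¹) ^ (n - k)) = (a k : K) * x ^ k := by
    intro k hk
    have hkn : k ≤ n := (Finset.mem_Icc.mp hk).2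
    have : x ^ n = x ^ k * x ^ (n - k) := by rw [← pow_add, Nat.add_sub_cancel' hkn]
    rw [this]
    field_simp
    rw [mul_right_comm, ← mul_pow, mul_one_div_cancel hx, one_pow, one_mul]
  rw [Finset.sum_congr rfl h2]
  ring

private lemma aux_monic' (n : ℕ) (hn : 2 ≤ n) (a : ℕ → ℕ) :
    ((X : ℤ[X]) ^ n - ∑ k ∈ Finset.Icc 1 n, C (a k : ℤ) * X ^ (n - k)).Monic := by
  have H : (∑ k ∈ Finset.Icc 1 n, C (a k : ℤ) * X ^ (n - k)).degree < (n : WithBot ℕ) := by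
    refine (Polynomial.degree_sum_le _ _).trans_lt ?_
    have hn0 : (⊥ : WithBot ℕ) < (n : WithBot ℕ) := by
      exact_mod_cast WithBot.bot_lt_coe n
    rw [Finset.sup_lt_iff hn0]
    intro k hk
    refine (degree_mul_le _ _).trans_lt
      (lt_of_le_of_lt (add_le_add degree_C_le (degree_X_pow_le (n - k))) ?_)
    rw [zero_add]
    exact_mod_cast Nat.sub_lt (by omega) (Finset.mem_Icc.mp hk).1
  exact monic_X_pow_sub H

/-- With `g(t) = (∑_{k=1}^n a_k t^k) - 1` as before (`n ≥ 2`, `a_k ≥ 0`,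
`a_n ≥ 1`, `gcd {k : a_k ≠ 0} = 1`), if `r0` is the unique root of `g` of smallest absolute
value (real with `0 < r0 < 1`), then `1/r0` is a Perron number. -/
theorem one_div_smallest_root_isPerronNumber
    (n : ℕ) (hn : 2 ≤ n) (a : ℕ → ℕ) (g : Polynomial ℤ)
    (hg : g = (∑ k ∈ Finset.Icc 1 n, C (a k : ℤ) * X ^ k) - 1)
    (han : 1 ≤ a n)
    (hgcd : ((Finset.Icc 1 n).filter fun k => a k ≠ 0).gcd id = 1)
    (r0 : ℝ) (hr0_pos : 0 < r0) (hr0_lt_one : r0 < 1)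
    (hr0_root : aeval r0 g = 0)
    (hr0_min : ∀ z : ℂ, aeval z g = 0 → z ≠ (r0 : ℂ) → (r0 : ℝ) < ‖z‖) :
    IsPerronNumber (1 / r0) := by
  set P : ℤ[X] := (X : ℤ[X]) ^ n - ∑ k ∈ Finset.Icc 1 n, C (a k : ℤ) * X ^ (n - k) with hP
  have hr0ne : r0 ≠ 0 := ne_of_gt hr0_pos
  have hτ : (1 : ℝ) < 1 / r0 := one_lt_one_div hr0_pos hr0_lt_one
  have hPmonic : P.Monic := aux_monic' n hn a
  have hPτ : aeval (1 / r0) P = 0 := by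
    have h := aux_eval' n a r0 hr0ne
    rw [← hg, hr0_root, neg_zero] at h
    rw [one_div]
    exact (mul_eq_zero.mp h).resolve_left (pow_ne_zero n hr0ne)
  have hint : IsIntegral ℤ (1 / r0) := ⟨P, hPmonic, by rwa [← aeval_def]⟩
  refine ⟨hτ, hint, ?_⟩
  intro z hz hzne
  have hQ : aeval ((1 : ℝ) / r0) (P.map (algebraMap ℤ ℚ)) = 0 := by
    rwa [aeval_map_algebraMap]
  have hdvd := minpoly.dvd ℚ (1 / r0) hQ
  have hzP : aeval z P = 0 := by
    obtain ⟨q, hq⟩ := hdvd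
    have h2 : aeval z (P.map (algebraMap ℤ ℚ)) = 0 := by
      rw [hq, map_mul, hz, zero_mul]
    rwa [aeval_map_algebraMap] at h2
  have hz0 : z ≠ 0 := by
    intro h0
    rw [h0] at hzP
    have : aeval (0 : ℂ) P = -(a n : ℂ) := by
      rw [hP]
      simp only [map_sub, map_sum, map_mul, map_pow, aeval_X, aeval_C]
      rw [zero_pow (by omega : n ≠ 0), Finset.sum_eq_single n]
      · simp [pow_zero (0:ℂ), Nat.sub_self]
      · intro k hk hkn
        rw [zero_pow (by have := Finset.mem_Icc.mp hk; omega : n - k ≠ 0), mul_zero]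
      · intro h
        exact absurd (Finset.mem_Icc.mpr ⟨by omega, le_refl n⟩) h
    rw [this] at hzP
    have han' : (a n : ℂ) ≠ 0 := by exact_mod_cast Nat.one_le_iff_ne_zero.mp han
    exact han' (neg_eq_zero.mp hzP)
  have hg1z : aeval z⁻¹ g = 0 := by
    have h := aux_eval' n a z⁻¹ (inv_ne_zero hz0)
    rw [inv_inv, ← hg, hzP, mul_zero] at h
    exact neg_eq_zero.mp h.symm
  by_cases hzr : z⁻¹ = (r0 : ℂ)
  · exfalso
    apply hzne
    have : z = ((r0 : ℂ))⁻¹ := by rw [← hzr, inv_inv]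
    rw [this]
    push_cast
    rw [one_div]
  · have hlt := hr0_min z⁻¹ hg1z hzr
    rw [norm_inv] at hlt
    have habs : 0 < ‖z‖ := norm_pos_iff.mpr hz0
    rw [lt_div_iff₀ hr0_pos]
    have h1 : r0 * ‖z‖ < 1 := by
      have := mul_lt_mul_of_pos_right hlt habs
      rwa [inv_mul_cancel₀ (ne_of_gt habs)] at this
    linarith
end

section
/- Let f and v2222 be nonnegative integers with f ≥ 5, v2222 ≥ 1, and (v2222, f) ≠ (1, 5). Define the polynomial H₂(t) = (v2222 − 1)·t² + (f − 4)·t − 1 with integer coefficients. Then all coefficients of H₂ in positive degrees are nonnegative, and there exists a real number r0 with 0 < r0 < 1 such that H₂(r0) = 0, every complex root z of H₂ with z ≠ r0 satisfies |z| > r0, and 1/r0 is a Perron number. -/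
open Polynomial

/-- For `f ≥ 5`, `v2222 ≥ 1` with `(v2222, f) ≠ (1, 5)`, the polynomial
`H₂(t) = (v2222 - 1)t² + (f - 4)t - 1` has nonnegative coefficients in all positive degrees,
and it has a root `r0 ∈ (0,1)` such that every other complex root has absolute value
strictly greater than `r0`, and `1/r0` is a Perron number. -/
theorem right_angled_growth_rate_isPerronNumber
    (f v2222 : ℕ) (hf : 5 ≤ f) (hv : 1 ≤ v2222) (hne : ¬(v2222 = 1 ∧ f = 5))
    (H : Polynomial ℤ)
    (hH : H = C ((v2222 : ℤ) - 1) * X ^ 2 + C ((f : ℤ) - 4) * X - 1) :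
    (∀ k : ℕ, 1 ≤ k → 0 ≤ H.coeff k) ∧
    ∃ r0 : ℝ, 0 < r0 ∧ r0 < 1 ∧ aeval r0 H = 0 ∧
      (∀ z : ℂ, aeval z H = 0 → z ≠ (r0 : ℂ) → (r0 : ℝ) < ‖z‖) ∧
      IsPerronNumber (1 / r0) := by
  subst hH
  have ha0 : (0:ℤ) ≤ (v2222:ℤ) - 1 := by omega
  have hb0 : (0:ℤ) ≤ (f:ℤ) - 4 := by omega
  have hevalR : ∀ r0 : ℝ,
      aeval r0 (C ((v2222 : ℤ) - 1) * X ^ 2 + C ((f:ℤ) - 4) * X - 1 : ℤ[X])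
        = ((v2222:ℝ) - 1) * r0^2 + ((f:ℝ) - 4) * r0 - 1 := by
    intro r0
    simp only [map_sub, map_add, map_mul, map_pow, map_one, aeval_X, aeval_C]
    simp only [eq_intCast]
    push_cast
    ring
  have hevalC : ∀ z : ℂ,
      aeval z (C ((v2222 : ℤ) - 1) * X ^ 2 + C ((f:ℤ) - 4) * X - 1 : ℤ[X])
        = ((v2222:ℂ) - 1) * z^2 + ((f:ℂ) - 4) * z - 1 := by
    intro z
    simp only [map_sub, map_add, map_mul, map_pow, map_one, aeval_X, aeval_C]
    simp only [eq_intCast]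
    push_cast
    ring
  constructor
  · intro k hk
    simp only [coeff_sub, coeff_add, coeff_C_mul, coeff_X_pow, coeff_X, coeff_one]
    rcases k with _|_|_|k <;> simp <;> omega
  by_cases hv1 : v2222 = 1
  · -- linear case
    have hf6 : 6 ≤ f := by omega
    have hfR : (6:ℝ) ≤ (f:ℝ) := by exact_mod_cast hf6
    set B : ℝ := (f:ℝ) - 4 with hBdef
    have hB : 2 ≤ B := by rw [hBdef]; linarith
    have hBpos : 0 < B := by linarith
    have hBC : ((f:ℂ) - 4) = ((B:ℝ):ℂ) := by rw [hBdef]; push_cast; ring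
    have hBCne : ((B:ℝ):ℂ) ≠ 0 := by
      simp only [ne_eq, Complex.ofReal_eq_zero]; linarith
    refine ⟨1/B, by positivity, by rw [div_lt_one hBpos]; linarith, ?_, ?_, ?_⟩
    · rw [hevalR, hv1, hBdef]
      push_cast
      field_simp
      rw [div_sub_one (pow_ne_zero 2 (ne_of_gt (by linarith)))]; ring
    · intro z hz hne'
      exfalso
      apply hne'
      rw [hevalC, hv1] at hz
      push_cast at hz
      rw [hBC] at hz
      have hinv : ((1/B : ℝ):ℂ) = ((B:ℝ):ℂ)⁻¹ := by push_cast; ring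
      rw [hinv]
      field_simp
      linear_combination hz
    · have h1B : (1:ℝ)/(1/B) = B := by field_simp
      rw [h1B]
      refine ⟨by linarith, ?_, ?_⟩
      · have hB' : B = algebraMap ℤ ℝ ((f:ℤ) - 4) := by rw [hBdef]; simp [eq_intCast]
        rw [hB']; exact isIntegral_algebraMap
      · intro z hz hzne
        exfalso
        apply hzne
        have hBQ : B = algebraMap ℚ ℝ ((f:ℚ) - 4) := by rw [hBdef]; simp [eq_ratCast]
        rw [hBQ, minpoly.eq_X_sub_C ℝ ((f:ℚ) - 4)] at hz
        simp only [map_sub, aeval_X, aeval_C, eq_ratCast] at hz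
        push_cast at hz
        rw [← hBC]
        linear_combination hz
  · -- quadratic case
    have hv2 : 2 ≤ v2222 := by omega
    have hvR : (2:ℝ) ≤ (v2222:ℝ) := by exact_mod_cast hv2
    have hfR : (5:ℝ) ≤ (f:ℝ) := by exact_mod_cast hf
    set A : ℝ := (v2222:ℝ) - 1 with hAdef
    set B : ℝ := (f:ℝ) - 4 with hBdef
    have hA : 1 ≤ A := by rw [hAdef]; linarith
    have hB : 1 ≤ B := by rw [hBdef]; linarith
    have hApos : 0 < A := by linarith
    have hBpos : 0 < B := by linarith
    set s : ℝ := Real.sqrt (B^2 + 4*A) with hsdef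
    have hs2 : s^2 = B^2 + 4*A := Real.sq_sqrt (by positivity)
    have hs0 : 0 ≤ s := Real.sqrt_nonneg _
    have hsB : B < s := by nlinarith
    set r0 : ℝ := (s - B)/(2*A) with hr0def
    have hr0pos : 0 < r0 := by
      rw [hr0def]; apply div_pos <;> linarith
    have hr0lt1 : r0 < 1 := by
      rw [hr0def, div_lt_one (by linarith)]
      nlinarith
    have hkey : 2*A*r0 = s - B := by
      rw [hr0def]; field_simp
    have hroot : A*r0^2 + B*r0 - 1 = 0 := by
      have hmain : 4*A*(A*r0^2 + B*r0 - 1) = 0 := by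
        linear_combination (2*A*r0 + s + B) * hkey + hs2
      rcases mul_eq_zero.mp hmain with h | h
      · exfalso; linarith
      · exact h
    have hτ : 1/r0 = (s+B)/2 := by
      rw [hr0def, one_div_div, div_eq_div_iff (by linarith) (by norm_num)]
      linear_combination -hs2
    have hAC : ((v2222:ℂ) - 1) = ((A:ℝ):ℂ) := by rw [hAdef]; push_cast; ring
    have hBC : ((f:ℂ) - 4) = ((B:ℝ):ℂ) := by rw [hBdef]; push_cast; ring
    have hACne : ((A:ℝ):ℂ) ≠ 0 := by
      simp only [ne_eq, Complex.ofReal_eq_zero]; linarith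
    refine ⟨r0, hr0pos, hr0lt1, ?_, ?_, ?_⟩
    · rw [hevalR]
      linear_combination hroot - r0^2 * hAdef - r0 * hBdef
    · -- complex roots of H
      intro z hz hne'
      rw [hevalC, hAC, hBC] at hz
      set r1 : ℝ := -(s+B)/(2*A) with hr1def
      have hk1 : 2*A*r1 = -(s+B) := by rw [hr1def]; field_simp
      have hsum : A * (r0 + r1) = -B := by
        linear_combination hkey/2 + hk1/2
      have hprod : A * (r0 * r1) = -1 := by
        have h4 : 4*A*(A*(r0*r1) + 1) = 0 := by
          linear_combination r1*2*A*hkey + (s - B)*hk1 - hs2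
        rcases mul_eq_zero.mp h4 with h | h
        · exfalso; linarith
        · linarith
      have h1 := congrArg (Complex.ofReal) hsum
      have h2 := congrArg (Complex.ofReal) hprod
      push_cast at h1 h2
      have hfact : ((A:ℝ):ℂ) * ((z - (r0:ℝ)) * (z - (r1:ℝ))) = 0 := by
        linear_combination hz - z*h1 + h2
      rcases mul_eq_zero.mp hfact with h | h
      · exact absurd h hACne
      rcases mul_eq_zero.mp h with h | h
      · exact absurd (by linear_combination h) hne'
      · have hz1 : z = ((r1:ℝ):ℂ) := by linear_combination h
        rw [hz1, Complex.norm_real, Real.norm_eq_abs,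
          abs_of_neg (show r1 < 0 by
            rw [hr1def]; apply div_neg_of_neg_of_pos <;> linarith)]
        rw [hr1def, hr0def, neg_div, neg_neg,
          div_lt_div_iff₀ (by linarith) (by linarith)]
        nlinarith
    · -- Perron
      rw [hτ]
      set τ : ℝ := (s+B)/2 with hτdef
      have hτval : τ^2 - B*τ - A = 0 := by
        rw [hτdef]; linear_combination hs2/4
      have hτgt1 : 1 < τ := by rw [hτdef]; linarith
      have hτC := congrArg (Complex.ofReal) hτval
      push_cast at hτC
      refine ⟨hτgt1, ?_, ?_⟩
      · refine ⟨X^2 - C ((f:ℤ)-4) * X - C ((v2222:ℤ)-1), by monicity!, ?_⟩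
        rw [← aeval_def]
        simp only [map_sub, map_mul, map_pow, aeval_X, aeval_C]
        simp only [eq_intCast]
        push_cast
        linear_combination hτval + τ * hBdef + hAdef
      · intro z hz hzne
        have hdvd : minpoly ℚ τ ∣ (X^2 - C ((f:ℚ)-4) * X - C ((v2222:ℚ)-1)) := by
          apply minpoly.dvd
          simp only [map_sub, map_mul, map_pow, aeval_X, aeval_C]
          simp only [eq_ratCast]
          push_cast
          linear_combination hτval + τ * hBdef + hAdef
        obtain ⟨q, hq⟩ := hdvd
        have hzq : aeval z (X^2 - C ((f:ℚ)-4) * X - C ((v2222:ℚ)-1)) = 0 := by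
          rw [hq, map_mul, hz, zero_mul]
        simp only [map_sub, map_mul, map_pow, aeval_X, aeval_C] at hzq
        simp only [eq_ratCast] at hzq
        push_cast at hzq
        rw [hAC, hBC] at hzq
        have hfact : (z - ((τ:ℝ):ℂ)) * (z - (((B - τ:ℝ)):ℂ)) = 0 := by
          push_cast
          linear_combination hzq - hτC
        rcases mul_eq_zero.mp hfact with h | h
        · exact absurd (by linear_combination h) hzne
        · have hz1 : z = (((B - τ:ℝ)):ℂ) := by linear_combination h
          rw [hz1, Complex.norm_real, Real.norm_eq_abs,
            abs_of_neg (show B - τ < 0 by rw [hτdef]; linarith)]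
          rw [hτdef]; linarith
end

section
/- Let f, v2222, v223, v226, v233, v236, v333, e3, e6 be nonnegative integers satisfying: f ≥ 5; v2222 + v236 + v333 ≥ 1; 2·e3 = 3·v333 + 2·v233 + v223 + v236; 2·e6 = v226 + v236; and e6 ≥ 1. Define H₂₃₆(t) = (v2222 + v236 + v333 − 1)·t⁹ + (v2222 + 2·v236 + 2·v333 + f − 5)·t⁸ + (2·v2222 + (1/2)·v223 + (1/2)·v226 + v233 + 3·v236 + (5/2)·v333 + f − 7)·t⁷ + (2·v2222 + (1/2)·v226 + v233 + (7/2)·v236 + 3·v333 + 2·f − 11)·t⁶ + (2·v2222 + (1/2)·v223 + v226 + v233 + (7/2)·v236 + (7/2)·v333 + 2·f − 12)·t⁵ + (2·v2222 + (1/2)·v223 + v226 + v233 + (5/2)·v236 + (5/2)·v333 + 2·f − 12)·t⁴ + (v2222 + (1/2)·v226 + v233 + (3/2)·v236 + 2·v333 + 2·f − 11)·t³ + (v2222 + (1/2)·v223 + (1/2)·v226 + v233 + v236 + (3/2)·v333 + f − 7)·t² + (f − 5)·t − 1. Then all coefficients of H₂₃₆ are integers, the coefficients in degrees 1 through 9 are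 nonnegative, the coefficients of t⁷ and t⁸ are strictly positive, and there exists a real number r0 with 0 < r0 < 1 such that H₂₃₆(r0) = 0, every complex root z of H₂₃₆ with z ≠ r0 satisfies |z| > r0, and 1/r0 is a Perron number. -/
open Polynomial

theorem aux (m1 m2 m3 m4 m5 m6 m7 m8 m9 : ℤ)
    (h1 : 0 ≤ m1) (h2 : 0 ≤ m2) (h3 : 0 ≤ m3) (h4 : 0 ≤ m4) (h5 : 0 ≤ m5) (h6 : 0 ≤ m6)
    (h7 : 0 < m7) (h8 : 0 < m8) (h9 : 0 ≤ m9)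
    (hsum : 1 < m1 + m2 + m3 + m4 + m5 + m6 + m7 + m8 + m9) :
    ∃ r0 : ℝ, 0 < r0 ∧ r0 < 1 ∧
      aeval r0 (C (m9:ℚ)*X^9 + C (m8:ℚ)*X^8 + C (m7:ℚ)*X^7 + C (m6:ℚ)*X^6 + C (m5:ℚ)*X^5
        + C (m4:ℚ)*X^4 + C (m3:ℚ)*X^3 + C (m2:ℚ)*X^2 + C (m1:ℚ)*X - 1 : ℚ[X]) = 0 ∧
      (∀ z : ℂ, aeval z (C (m9:ℚ)*X^9 + C (m8:ℚ)*X^8 + C (m7:ℚ)*X^7 + C (m6:ℚ)*X^6 + C (m5:ℚ)*X^5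
        + C (m4:ℚ)*X^4 + C (m3:ℚ)*X^3 + C (m2:ℚ)*X^2 + C (m1:ℚ)*X - 1 : ℚ[X]) = 0 →
        z ≠ (r0:ℂ) → (r0:ℝ) < ‖z‖) ∧
      IsPerronNumber (1 / r0) := by
  have b1 : (0:ℝ) ≤ (m1:ℝ) := by exact_mod_cast h1
  have b2 : (0:ℝ) ≤ (m2:ℝ) := by exact_mod_cast h2
  have b3 : (0:ℝ) ≤ (m3:ℝ) := by exact_mod_cast h3
  have b4 : (0:ℝ) ≤ (m4:ℝ) := by exact_mod_cast h4
  have b5 : (0:ℝ) ≤ (m5:ℝ) := by exact_mod_cast h5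
  have b6 : (0:ℝ) ≤ (m6:ℝ) := by exact_mod_cast h6
  have b7 : (0:ℝ) < (m7:ℝ) := by exact_mod_cast h7
  have b8 : (0:ℝ) < (m8:ℝ) := by exact_mod_cast h8
  have b9 : (0:ℝ) ≤ (m9:ℝ) := by exact_mod_cast h9
  set F : ℝ → ℝ := fun x => (m9:ℝ)*x^9 + (m8:ℝ)*x^8 + (m7:ℝ)*x^7 + (m6:ℝ)*x^6 + (m5:ℝ)*x^5
      + (m4:ℝ)*x^4 + (m3:ℝ)*x^3 + (m2:ℝ)*x^2 + (m1:ℝ)*x with hF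
  have hmono : ∀ x y : ℝ, 0 ≤ x → x < y → F x < F y := by
    intro x y hx hxy
    have q9 := mul_le_mul_of_nonneg_left (pow_le_pow_left₀ hx hxy.le 9) b9
    have q8 := mul_lt_mul_of_pos_left (pow_lt_pow_left₀ hxy hx (by norm_num : (8:ℕ) ≠ 0)) b8
    have q7 := mul_le_mul_of_nonneg_left (pow_le_pow_left₀ hx hxy.le 7) b7.le
    have q6 := mul_le_mul_of_nonneg_left (pow_le_pow_left₀ hx hxy.le 6) b6
    have q5 := mul_le_mul_of_nonneg_left (pow_le_pow_left₀ hx hxy.le 5) b5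
    have q4 := mul_le_mul_of_nonneg_left (pow_le_pow_left₀ hx hxy.le 4) b4
    have q3 := mul_le_mul_of_nonneg_left (pow_le_pow_left₀ hx hxy.le 3) b3
    have q2 := mul_le_mul_of_nonneg_left (pow_le_pow_left₀ hx hxy.le 2) b2
    have q1 := mul_le_mul_of_nonneg_left hxy.le b1
    simp only [hF]
    linarith
  have hcont : Continuous F := by fun_prop
  have hF0 : F 0 = 0 := by simp [hF]
  have hF1 : 1 < F 1 := by
    have hs : (1:ℝ) < (m1:ℝ)+m2+m3+m4+m5+m6+m7+m8+m9 := by exact_mod_cast hsum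
    simp only [hF]
    linarith
  obtain ⟨r0, hr0mem, hFr0⟩ : ∃ r0 ∈ Set.Ioo (0:ℝ) 1, F r0 = 1 := by
    have h := intermediate_value_Ioo (le_of_lt one_pos) hcont.continuousOn
    have h1m : (1:ℝ) ∈ Set.Ioo (F 0) (F 1) := by rw [hF0]; exact ⟨one_pos, hF1⟩
    obtain ⟨x, hx, hx1⟩ := h h1m
    exact ⟨x, hx, hx1⟩
  obtain ⟨hr0pos, hr0lt1⟩ := hr0mem
  have evR : ∀ x : ℝ, aeval x (C (m9:ℚ)*X^9 + C (m8:ℚ)*X^8 + C (m7:ℚ)*X^7 + C (m6:ℚ)*X^6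
      + C (m5:ℚ)*X^5 + C (m4:ℚ)*X^4 + C (m3:ℚ)*X^3 + C (m2:ℚ)*X^2 + C (m1:ℚ)*X - 1 : ℚ[X])
      = F x - 1 := by
    intro x
    simp only [map_add, map_sub, map_mul, map_pow, map_one, aeval_C, aeval_X, hF]
    norm_num
  have evC : ∀ z : ℂ, aeval z (C (m9:ℚ)*X^9 + C (m8:ℚ)*X^8 + C (m7:ℚ)*X^7 + C (m6:ℚ)*X^6
      + C (m5:ℚ)*X^5 + C (m4:ℚ)*X^4 + C (m3:ℚ)*X^3 + C (m2:ℚ)*X^2 + C (m1:ℚ)*X - 1 : ℚ[X])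
      = (m9:ℂ)*z^9 + (m8:ℂ)*z^8 + (m7:ℂ)*z^7 + (m6:ℂ)*z^6 + (m5:ℂ)*z^5 + (m4:ℂ)*z^4
        + (m3:ℂ)*z^3 + (m2:ℂ)*z^2 + (m1:ℂ)*z - 1 := by
    intro z
    simp only [map_add, map_sub, map_mul, map_pow, map_one, aeval_C, aeval_X]
    norm_num
  have hFr0' : (m9:ℝ)*r0^9 + (m8:ℝ)*r0^8 + (m7:ℝ)*r0^7 + (m6:ℝ)*r0^6 + (m5:ℝ)*r0^5
      + (m4:ℝ)*r0^4 + (m3:ℝ)*r0^3 + (m2:ℝ)*r0^2 + (m1:ℝ)*r0 = 1 := by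
    have := hFr0
    simp only [hF] at this
    exact this
  have key : ∀ z : ℂ, (m9:ℂ)*z^9 + (m8:ℂ)*z^8 + (m7:ℂ)*z^7 + (m6:ℂ)*z^6 + (m5:ℂ)*z^5 + (m4:ℂ)*z^4
      + (m3:ℂ)*z^3 + (m2:ℂ)*z^2 + (m1:ℂ)*z = 1 → z ≠ (r0:ℂ) → r0 < ‖z‖ := by
    intro z hz hne
    set r := ‖z‖ with hr
    have hz0 : z ≠ 0 := by
      intro h; rw [h] at hz; simp at hz
    have hrpos : 0 < r := norm_pos_iff.mpr hz0
    have aterm : ∀ (m : ℤ), 0 ≤ m → ∀ k : ℕ, ‖(m:ℂ) * z^k‖ = (m:ℝ) * r^k := by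
      intro m hm k
      rw [norm_mul, norm_pow]
      congr 1
      rw [Complex.norm_intCast]
      exact abs_of_nonneg (by exact_mod_cast hm)
    have T : ∀ (u v : ℂ) (bu bv : ℝ), ‖u‖ ≤ bu → ‖v‖ ≤ bv →
        ‖u + v‖ ≤ bu + bv := fun u v bu bv hu hv =>
      (norm_add_le u v).trans (add_le_add hu hv)
    have a9' := (aterm m9 h9 9).le
    have a8' := (aterm m8 h8.le 8).le
    have a7' := (aterm m7 h7.le 7).le
    have a6' := (aterm m6 h6 6).le
    have a5' := (aterm m5 h5 5).le
    have a4' := (aterm m4 h4 4).le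
    have a3' := (aterm m3 h3 3).le
    have a2' := (aterm m2 h2 2).le
    have a1' : ‖(m1:ℂ) * z‖ ≤ (m1:ℝ) * r := by
      simpa using (aterm m1 h1 1).le
    -- full triangle bound
    have hfull : ‖(m9:ℂ)*z^9 + (m8:ℂ)*z^8 + (m7:ℂ)*z^7 + (m6:ℂ)*z^6 + (m5:ℂ)*z^5
        + (m4:ℂ)*z^4 + (m3:ℂ)*z^3 + (m2:ℂ)*z^2 + (m1:ℂ)*z‖ ≤ F r := by
      rw [hF]
      exact T _ _ _ _ (T _ _ _ _ (T _ _ _ _ (T _ _ _ _ (T _ _ _ _ (T _ _ _ _ (T _ _ _ _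
        (T _ _ _ _ a9' a8') a7') a6') a5') a4') a3') a2') a1'
    have hone : ‖(m9:ℂ)*z^9 + (m8:ℂ)*z^8 + (m7:ℂ)*z^7 + (m6:ℂ)*z^6 + (m5:ℂ)*z^5
        + (m4:ℂ)*z^4 + (m3:ℂ)*z^3 + (m2:ℂ)*z^2 + (m1:ℂ)*z‖ = 1 := by rw [hz]; simp
    have hge : r0 ≤ r := by
      by_contra hlt
      push_neg at hlt
      have := hmono r r0 hrpos.le hlt
      rw [hFr0] at this
      rw [hone] at hfull
      linarith
    rcases lt_or_eq_of_le hge with h | h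
    · exact h
    -- equality case : r = r0
    exfalso
    have hreq : r = r0 := h.symm
    have hFr : F r = 1 := by rw [hreq, hFr0]
    -- split
    have hsplit : (m9:ℂ)*z^9 + (m8:ℂ)*z^8 + (m7:ℂ)*z^7 + (m6:ℂ)*z^6 + (m5:ℂ)*z^5
        + (m4:ℂ)*z^4 + (m3:ℂ)*z^3 + (m2:ℂ)*z^2 + (m1:ℂ)*z
        = ((m9:ℂ)*z^9 + (m6:ℂ)*z^6 + (m5:ℂ)*z^5 + (m4:ℂ)*z^4 + (m3:ℂ)*z^3 + (m2:ℂ)*z^2 + (m1:ℂ)*z)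
          + ((m7:ℂ)*z^7 + (m8:ℂ)*z^8) := by ring
    have hRest : ‖(m9:ℂ)*z^9 + (m6:ℂ)*z^6 + (m5:ℂ)*z^5 + (m4:ℂ)*z^4 + (m3:ℂ)*z^3
        + (m2:ℂ)*z^2 + (m1:ℂ)*z‖
        ≤ (m9:ℝ)*r^9 + (m6:ℝ)*r^6 + (m5:ℝ)*r^5 + (m4:ℝ)*r^4 + (m3:ℝ)*r^3 + (m2:ℝ)*r^2 + (m1:ℝ)*r :=
      T _ _ _ _ (T _ _ _ _ (T _ _ _ _ (T _ _ _ _ (T _ _ _ _ (T _ _ _ _ a9' a6') a5') a4') a3') a2') a1'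
    have h78le : ‖(m7:ℂ)*z^7 + (m8:ℂ)*z^8‖ ≤ (m7:ℝ)*r^7 + (m8:ℝ)*r^8 :=
      T _ _ _ _ a7' a8'
    have h1le : (1:ℝ) ≤ ‖(m9:ℂ)*z^9 + (m6:ℂ)*z^6 + (m5:ℂ)*z^5 + (m4:ℂ)*z^4
        + (m3:ℂ)*z^3 + (m2:ℂ)*z^2 + (m1:ℂ)*z‖ + ‖(m7:ℂ)*z^7 + (m8:ℂ)*z^8‖ := by
      rw [← hone, hsplit]
      exact norm_add_le _ _
    have hFrexp : (m9:ℝ)*r^9 + (m8:ℝ)*r^8 + (m7:ℝ)*r^7 + (m6:ℝ)*r^6 + (m5:ℝ)*r^5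
        + (m4:ℝ)*r^4 + (m3:ℝ)*r^3 + (m2:ℝ)*r^2 + (m1:ℝ)*r = 1 := by
      rw [← hFr, hF]
    have habs78 : ‖(m7:ℂ)*z^7 + (m8:ℂ)*z^8‖ = (m7:ℝ)*r^7 + (m8:ℝ)*r^8 :=
      le_antisymm h78le (by linarith)
    -- same ray
    have hnorm : ‖(m7:ℂ)*z^7 + (m8:ℂ)*z^8‖ = ‖(m7:ℂ)*z^7‖ + ‖(m8:ℂ)*z^8‖ := by
      rw [habs78,
        aterm m7 h7.le 7, aterm m8 h8.le 8]
    have hray : SameRay ℝ ((m7:ℂ)*z^7) ((m8:ℂ)*z^8) := sameRay_iff_norm_add.mpr hnorm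
    have ht7 : (m7:ℂ)*z^7 ≠ 0 :=
      mul_ne_zero (by exact_mod_cast h7.ne') (pow_ne_zero _ hz0)
    have ht8 : (m8:ℂ)*z^8 ≠ 0 :=
      mul_ne_zero (by exact_mod_cast h8.ne') (pow_ne_zero _ hz0)
    obtain ⟨a, b, ha, hb, hab⟩ := hray.exists_pos ht7 ht8
    rw [Complex.real_smul, Complex.real_smul] at hab
    have hz7 : z^7 ≠ 0 := pow_ne_zero _ hz0
    have hbm8 : ((b:ℂ) * (m8:ℂ)) ≠ 0 := by
      apply mul_ne_zero
      · exact_mod_cast hb.ne'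
      · exact_mod_cast h8.ne'
    have hcancel : ((b:ℂ) * (m8:ℂ)) * z = (a:ℂ) * (m7:ℂ) := by
      apply mul_right_cancel₀ hz7
      linear_combination -hab
    have hzval : z = (((a * m7) / (b * m8) : ℝ) : ℂ) := by
      push_cast
      rw [eq_div_iff hbm8]
      linear_combination hcancel
    have hcpos : 0 < (a * (m7:ℝ)) / (b * (m8:ℝ)) := div_pos (mul_pos ha b7) (mul_pos hb b8)
    have : r = (a * (m7:ℝ)) / (b * (m8:ℝ)) := by
      rw [hr, hzval, Complex.norm_real, Real.norm_eq_abs, abs_of_pos hcpos]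
    apply hne
    rw [hzval, ← this, hreq]
  refine ⟨r0, hr0pos, hr0lt1, ?_, ?_, ?_⟩
  · rw [evR, hFr0]; ring
  · intro z hz hne
    rw [evC z] at hz
    apply key z _ hne
    linear_combination hz
  · -- Perron
    have hr0ne : r0 ≠ 0 := hr0pos.ne'
    set τ : ℝ := 1 / r0 with hτ
    have hτ1 : 1 < τ := one_lt_one_div hr0pos hr0lt1
    have hτpos : 0 < τ := lt_trans one_pos hτ1
    have hτne : τ ≠ 0 := hτpos.ne'
    set P : ℤ[X] := X^9 - C m1 * X^8 - C m2 * X^7 - C m3 * X^6 - C m4 * X^5 - C m5 * X^4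
        - C m6 * X^3 - C m7 * X^2 - C m8 * X - C m9 with hP
    have hPmonic : P.Monic := by unfold P; monicity!
    have hPval : aeval τ P = 0 := by
      rw [hP]
      simp only [map_sub, map_mul, map_pow, aeval_C, aeval_X, algebraMap_int_eq, eq_intCast, map_intCast]
      rw [hτ, one_div]
      have h9 : (r0^9:ℝ) ≠ 0 := pow_ne_zero _ hr0ne
      apply mul_right_cancel₀ h9
      calc ((r0⁻¹)^9 - (m1:ℝ)*(r0⁻¹)^8 - (m2:ℝ)*(r0⁻¹)^7 - (m3:ℝ)*(r0⁻¹)^6 - (m4:ℝ)*(r0⁻¹)^5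
          - (m5:ℝ)*(r0⁻¹)^4 - (m6:ℝ)*(r0⁻¹)^3 - (m7:ℝ)*(r0⁻¹)^2 - (m8:ℝ)*r0⁻¹ - (m9:ℝ)) * r0^9
          = (r0⁻¹*r0)^9 - (m1:ℝ)*(r0⁻¹*r0)^8*r0 - (m2:ℝ)*(r0⁻¹*r0)^7*r0^2 - (m3:ℝ)*(r0⁻¹*r0)^6*r0^3
            - (m4:ℝ)*(r0⁻¹*r0)^5*r0^4 - (m5:ℝ)*(r0⁻¹*r0)^4*r0^5 - (m6:ℝ)*(r0⁻¹*r0)^3*r0^6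
            - (m7:ℝ)*(r0⁻¹*r0)^2*r0^7 - (m8:ℝ)*(r0⁻¹*r0)*r0^8 - (m9:ℝ)*r0^9 := by ring
        _ = 1 - (m1:ℝ)*r0 - (m2:ℝ)*r0^2 - (m3:ℝ)*r0^3 - (m4:ℝ)*r0^4 - (m5:ℝ)*r0^5 - (m6:ℝ)*r0^6
            - (m7:ℝ)*r0^7 - (m8:ℝ)*r0^8 - (m9:ℝ)*r0^9 := by rw [inv_mul_cancel₀ hr0ne]; ring
        _ = 0 * r0^9 := by linear_combination -hFr0'
    have hint : IsIntegral ℤ τ := ⟨P, hPmonic, by rw [← aeval_def]; exact hPval⟩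
    refine ⟨hτ1, hint, ?_⟩
    have hintQ : IsIntegral ℚ τ := hint.tower_top
    have hdvd : minpoly ℚ τ ∣ P.map (algebraMap ℤ ℚ) :=
      minpoly.dvd ℚ τ (by rw [aeval_map_algebraMap]; exact hPval)
    intro z hzmin hzne
    have hz0 : z ≠ 0 := by
      intro h
      apply minpoly.coeff_zero_ne_zero hintQ hτne
      have h0 : aeval (0:ℂ) (minpoly ℚ τ) = algebraMap ℚ ℂ ((minpoly ℚ τ).coeff 0) := by
        rw [aeval_def, eval₂_at_zero]
      rw [h] at hzmin
      rw [h0] at hzmin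
      exact (map_eq_zero_iff (algebraMap ℚ ℂ) (algebraMap ℚ ℂ).injective).mp hzmin
    have hzP : aeval z (P.map (algebraMap ℤ ℚ)) = 0 := by
      obtain ⟨q, hq⟩ := hdvd
      rw [hq, map_mul, hzmin, zero_mul]
    have hzP' : aeval z P = 0 := by
      rwa [aeval_map_algebraMap] at hzP
    have hzPe : z^9 - (m1:ℂ)*z^8 - (m2:ℂ)*z^7 - (m3:ℂ)*z^6 - (m4:ℂ)*z^5 - (m5:ℂ)*z^4
        - (m6:ℂ)*z^3 - (m7:ℂ)*z^2 - (m8:ℂ)*z - (m9:ℂ) = 0 := by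
      rw [hP] at hzP'
      simpa only [map_sub, map_mul, map_pow, aeval_C, aeval_X, algebraMap_int_eq, eq_intCast, map_intCast]
        using hzP'
    have hwval : (m9:ℂ)*(z⁻¹)^9 + (m8:ℂ)*(z⁻¹)^8 + (m7:ℂ)*(z⁻¹)^7 + (m6:ℂ)*(z⁻¹)^6
        + (m5:ℂ)*(z⁻¹)^5 + (m4:ℂ)*(z⁻¹)^4 + (m3:ℂ)*(z⁻¹)^3 + (m2:ℂ)*(z⁻¹)^2 + (m1:ℂ)*z⁻¹ = 1 := by
      have h9 : (z^9:ℂ) ≠ 0 := pow_ne_zero _ hz0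
      apply mul_right_cancel₀ h9
      calc ((m9:ℂ)*(z⁻¹)^9 + (m8:ℂ)*(z⁻¹)^8 + (m7:ℂ)*(z⁻¹)^7 + (m6:ℂ)*(z⁻¹)^6 + (m5:ℂ)*(z⁻¹)^5
          + (m4:ℂ)*(z⁻¹)^4 + (m3:ℂ)*(z⁻¹)^3 + (m2:ℂ)*(z⁻¹)^2 + (m1:ℂ)*z⁻¹) * z^9
          = (m9:ℂ)*(z⁻¹*z)^9 + (m8:ℂ)*(z⁻¹*z)^8*z + (m7:ℂ)*(z⁻¹*z)^7*z^2 + (m6:ℂ)*(z⁻¹*z)^6*z^3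
            + (m5:ℂ)*(z⁻¹*z)^5*z^4 + (m4:ℂ)*(z⁻¹*z)^4*z^5 + (m3:ℂ)*(z⁻¹*z)^3*z^6
            + (m2:ℂ)*(z⁻¹*z)^2*z^7 + (m1:ℂ)*(z⁻¹*z)*z^8 := by ring
        _ = (m9:ℂ) + (m8:ℂ)*z + (m7:ℂ)*z^2 + (m6:ℂ)*z^3 + (m5:ℂ)*z^4 + (m4:ℂ)*z^5 + (m3:ℂ)*z^6
            + (m2:ℂ)*z^7 + (m1:ℂ)*z^8 := by rw [inv_mul_cancel₀ hz0]; ring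
        _ = 1 * z^9 := by linear_combination -hzPe
    by_cases hwr : z⁻¹ = (r0:ℂ)
    · exfalso
      apply hzne
      have hzz : z = ((r0:ℂ))⁻¹ := by rw [← hwr, inv_inv]
      rw [hzz, hτ]
      push_cast
      rw [one_div]
    · have hlt := key z⁻¹ hwval hwr
      have habsw : ‖z⁻¹‖ = ‖z‖⁻¹ := norm_inv z
      have habsz : 0 < ‖z‖ := norm_pos_iff.mpr hz0
      rw [habsw] at hlt
      have h2 : r0 * ‖z‖ < 1 := by
        have := mul_lt_mul_of_pos_right hlt habsz
        rwa [inv_mul_cancel₀ habsz.ne'] at this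
      rw [hτ, lt_div_iff₀ hr0pos]
      linarith [h2, mul_comm r0 ‖z‖]

/-- the denominator polynomial `H₂₃₆` for non-compact hyperbolic Coxeter polyhedra
with dihedral angles `π/2`, `π/3`, `π/6` and at least one `π/6`-edge: its coefficients are
integers, nonnegative in degrees `1`–`9`, positive in degrees `7` and `8`, and it has a root
`r0 ∈ (0,1)` smaller in absolute value than all other complex roots, with `1/r0` a Perron
number. -/
theorem H236_growth_rate_isPerronNumber
    (f v2222 v223 v226 v233 v236 v333 e3 e6 : ℕ)
    (hf : 5 ≤ f)
    (hcusp : 1 ≤ v2222 + v236 + v333)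
    (he3 : 2 * e3 = 3 * v333 + 2 * v233 + v223 + v236)
    (he6 : 2 * e6 = v226 + v236)
    (he6' : 1 ≤ e6)
    (H : Polynomial ℚ)
    (hH : H = C ((v2222 : ℚ) + v236 + v333 - 1) * X ^ 9
        + C ((v2222 : ℚ) + 2 * v236 + 2 * v333 + f - 5) * X ^ 8
        + C (2 * (v2222 : ℚ) + (1/2) * v223 + (1/2) * v226 + v233 + 3 * v236
              + (5/2) * v333 + f - 7) * X ^ 7
        + C (2 * (v2222 : ℚ) + (1/2) * v226 + v233 + (7/2) * v236 + 3 * v333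
              + 2 * f - 11) * X ^ 6
        + C (2 * (v2222 : ℚ) + (1/2) * v223 + v226 + v233 + (7/2) * v236
              + (7/2) * v333 + 2 * f - 12) * X ^ 5
        + C (2 * (v2222 : ℚ) + (1/2) * v223 + v226 + v233 + (5/2) * v236
              + (5/2) * v333 + 2 * f - 12) * X ^ 4
        + C ((v2222 : ℚ) + (1/2) * v226 + v233 + (3/2) * v236 + 2 * v333
              + 2 * f - 11) * X ^ 3
        + C ((v2222 : ℚ) + (1/2) * v223 + (1/2) * v226 + v233 + v236
              + (3/2) * v333 + f - 7) * X ^ 2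
        + C ((f : ℚ) - 5) * X - 1) :
    (∀ k : ℕ, ∃ m : ℤ, H.coeff k = m) ∧
    (∀ k : ℕ, 1 ≤ k → 0 ≤ H.coeff k) ∧
    0 < H.coeff 7 ∧ 0 < H.coeff 8 ∧
    ∃ r0 : ℝ, 0 < r0 ∧ r0 < 1 ∧ aeval r0 H = 0 ∧
      (∀ z : ℂ, aeval z H = 0 → z ≠ (r0 : ℂ) → (r0 : ℝ) < ‖z‖) ∧
      IsPerronNumber (1 / r0) := by
  have hq3 : (2:ℚ) * e3 = 3 * v333 + 2 * v233 + v223 + v236 := by exact_mod_cast he3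
  have hq6 : (2:ℚ) * e6 = v226 + v236 := by exact_mod_cast he6
  -- integer forms
  have e9 : (v2222 : ℚ) + v236 + v333 - 1
      = (((v2222:ℤ) + v236 + v333 - 1 : ℤ) : ℚ) := by push_cast; ring
  have e8 : (v2222 : ℚ) + 2 * v236 + 2 * v333 + f - 5
      = (((v2222:ℤ) + 2*v236 + 2*v333 + f - 5 : ℤ) : ℚ) := by push_cast; ring
  have e7 : 2 * (v2222 : ℚ) + (1/2) * v223 + (1/2) * v226 + v233 + 3 * v236
        + (5/2) * v333 + f - 7
      = ((2*(v2222:ℤ) + e3 + e6 + v333 + 2*v236 + f - 7 : ℤ) : ℚ) := by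
    push_cast; linear_combination (-1/2) * hq3 + (-1/2) * hq6
  have e6' : 2 * (v2222 : ℚ) + (1/2) * v226 + v233 + (7/2) * v236 + 3 * v333 + 2 * f - 11
      = ((2*(v2222:ℤ) + e6 + v233 + 3*v236 + 3*v333 + 2*f - 11 : ℤ) : ℚ) := by
    push_cast; linear_combination (-1/2) * hq6
  have e5 : 2 * (v2222 : ℚ) + (1/2) * v223 + v226 + v233 + (7/2) * v236
        + (7/2) * v333 + 2 * f - 12
      = ((2*(v2222:ℤ) + e3 + v226 + 3*v236 + 2*v333 + 2*f - 12 : ℤ) : ℚ) := by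
    push_cast; linear_combination (-1/2) * hq3
  have e4 : 2 * (v2222 : ℚ) + (1/2) * v223 + v226 + v233 + (5/2) * v236
        + (5/2) * v333 + 2 * f - 12
      = ((2*(v2222:ℤ) + e3 + v226 + 2*v236 + v333 + 2*f - 12 : ℤ) : ℚ) := by
    push_cast; linear_combination (-1/2) * hq3
  have e3' : (v2222 : ℚ) + (1/2) * v226 + v233 + (3/2) * v236 + 2 * v333 + 2 * f - 11
      = (((v2222:ℤ) + e6 + v233 + v236 + 2*v333 + 2*f - 11 : ℤ) : ℚ) := by
    push_cast; linear_combination (-1/2) * hq6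
  have e2 : (v2222 : ℚ) + (1/2) * v223 + (1/2) * v226 + v233 + v236 + (3/2) * v333 + f - 7
      = (((v2222:ℤ) + e3 + e6 + f - 7 : ℤ) : ℚ) := by
    push_cast; linear_combination (-1/2) * hq3 + (-1/2) * hq6
  have e1 : (f : ℚ) - 5 = (((f:ℤ) - 5 : ℤ) : ℚ) := by push_cast; ring
  rw [e9, e8, e7, e6', e5, e4, e3', e2, e1] at hH
  -- nonnegativity of the integer coefficients
  have n9 : (0:ℤ) ≤ (v2222:ℤ) + v236 + v333 - 1 := by omega
  have n8 : (0:ℤ) < (v2222:ℤ) + 2*v236 + 2*v333 + f - 5 := by omega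
  have n7 : (0:ℤ) < 2*(v2222:ℤ) + e3 + e6 + v333 + 2*v236 + f - 7 := by omega
  have n6 : (0:ℤ) ≤ 2*(v2222:ℤ) + e6 + v233 + 3*v236 + 3*v333 + 2*f - 11 := by omega
  have n5 : (0:ℤ) ≤ 2*(v2222:ℤ) + e3 + v226 + 3*v236 + 2*v333 + 2*f - 12 := by omega
  have n4 : (0:ℤ) ≤ 2*(v2222:ℤ) + e3 + v226 + 2*v236 + v333 + 2*f - 12 := by omega
  have n3 : (0:ℤ) ≤ (v2222:ℤ) + e6 + v233 + v236 + 2*v333 + 2*f - 11 := by omega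
  have n2 : (0:ℤ) ≤ (v2222:ℤ) + e3 + e6 + f - 7 := by omega
  have n1 : (0:ℤ) ≤ (f:ℤ) - 5 := by omega
  have nsum : (1:ℤ) < ((f:ℤ) - 5) + ((v2222:ℤ) + e3 + e6 + f - 7)
      + ((v2222:ℤ) + e6 + v233 + v236 + 2*v333 + 2*f - 11)
      + (2*(v2222:ℤ) + e3 + v226 + 2*v236 + v333 + 2*f - 12)
      + (2*(v2222:ℤ) + e3 + v226 + 3*v236 + 2*v333 + 2*f - 12)
      + (2*(v2222:ℤ) + e6 + v233 + 3*v236 + 3*v333 + 2*f - 11)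
      + (2*(v2222:ℤ) + e3 + e6 + v333 + 2*v236 + f - 7)
      + ((v2222:ℤ) + 2*v236 + 2*v333 + f - 5)
      + ((v2222:ℤ) + v236 + v333 - 1) := by omega
  -- coefficients of H
  have hdeg : H.natDegree ≤ 9 := by
    rw [hH]; compute_degree
  have hc0 : H.coeff 0 = ((-1 : ℤ) : ℚ) := by
    rw [hH]; simp only [coeff_add, coeff_sub, coeff_C_mul, coeff_X_pow, coeff_one, coeff_X]; norm_num
  have hc1 : H.coeff 1 = (((f:ℤ) - 5 : ℤ) : ℚ) := by
    rw [hH]; simp only [coeff_add, coeff_sub, coeff_C_mul, coeff_X_pow, coeff_one, coeff_X]; norm_num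
  have hc2 : H.coeff 2 = (((v2222:ℤ) + e3 + e6 + f - 7 : ℤ) : ℚ) := by
    rw [hH]; simp only [coeff_add, coeff_sub, coeff_C_mul, coeff_X_pow, coeff_one, coeff_X]; norm_num
  have hc3 : H.coeff 3 = (((v2222:ℤ) + e6 + v233 + v236 + 2*v333 + 2*f - 11 : ℤ) : ℚ) := by
    rw [hH]; simp only [coeff_add, coeff_sub, coeff_C_mul, coeff_X_pow, coeff_one, coeff_X]; norm_num
  have hc4 : H.coeff 4 = ((2*(v2222:ℤ) + e3 + v226 + 2*v236 + v333 + 2*f - 12 : ℤ) : ℚ) := by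
    rw [hH]; simp only [coeff_add, coeff_sub, coeff_C_mul, coeff_X_pow, coeff_one, coeff_X]; norm_num
  have hc5 : H.coeff 5 = ((2*(v2222:ℤ) + e3 + v226 + 3*v236 + 2*v333 + 2*f - 12 : ℤ) : ℚ) := by
    rw [hH]; simp only [coeff_add, coeff_sub, coeff_C_mul, coeff_X_pow, coeff_one, coeff_X]; norm_num
  have hc6 : H.coeff 6 = ((2*(v2222:ℤ) + e6 + v233 + 3*v236 + 3*v333 + 2*f - 11 : ℤ) : ℚ) := by
    rw [hH]; simp only [coeff_add, coeff_sub, coeff_C_mul, coeff_X_pow, coeff_one, coeff_X]; norm_num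
  have hc7 : H.coeff 7 = ((2*(v2222:ℤ) + e3 + e6 + v333 + 2*v236 + f - 7 : ℤ) : ℚ) := by
    rw [hH]; simp only [coeff_add, coeff_sub, coeff_C_mul, coeff_X_pow, coeff_one, coeff_X]; norm_num
  have hc8 : H.coeff 8 = (((v2222:ℤ) + 2*v236 + 2*v333 + f - 5 : ℤ) : ℚ) := by
    rw [hH]; simp only [coeff_add, coeff_sub, coeff_C_mul, coeff_X_pow, coeff_one, coeff_X]; norm_num
  have hc9 : H.coeff 9 = (((v2222:ℤ) + v236 + v333 - 1 : ℤ) : ℚ) := by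
    rw [hH]; simp only [coeff_add, coeff_sub, coeff_C_mul, coeff_X_pow, coeff_one, coeff_X]; norm_num
  refine ⟨?_, ?_, ?_, ?_, ?_⟩
  · intro k
    by_cases hk : k ≤ 9
    · interval_cases k
      · exact ⟨-1, hc0⟩
      · exact ⟨_, hc1⟩
      · exact ⟨_, hc2⟩
      · exact ⟨_, hc3⟩
      · exact ⟨_, hc4⟩
      · exact ⟨_, hc5⟩
      · exact ⟨_, hc6⟩
      · exact ⟨_, hc7⟩
      · exact ⟨_, hc8⟩
      · exact ⟨_, hc9⟩
    · exact ⟨0, by rw [coeff_eq_zero_of_natDegree_lt (lt_of_le_of_lt hdeg (by omega))]; simp⟩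
  · intro k hk
    by_cases hk9 : k ≤ 9
    · interval_cases k
      · rw [hc1]; exact_mod_cast n1
      · rw [hc2]; exact_mod_cast n2
      · rw [hc3]; exact_mod_cast n3
      · rw [hc4]; exact_mod_cast n4
      · rw [hc5]; exact_mod_cast n5
      · rw [hc6]; exact_mod_cast n6
      · rw [hc7]; exact_mod_cast n7.le
      · rw [hc8]; exact_mod_cast n8.le
      · rw [hc9]; exact_mod_cast n9
    · rw [coeff_eq_zero_of_natDegree_lt (lt_of_le_of_lt hdeg (by omega))]
  · rw [hc7]; exact_mod_cast n7
  · rw [hc8]; exact_mod_cast n8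
  · obtain ⟨r0, h1, h2, h3, h4, h5⟩ := aux ((f:ℤ) - 5) ((v2222:ℤ) + e3 + e6 + f - 7)
      ((v2222:ℤ) + e6 + v233 + v236 + 2*v333 + 2*f - 11)
      (2*(v2222:ℤ) + e3 + v226 + 2*v236 + v333 + 2*f - 12)
      (2*(v2222:ℤ) + e3 + v226 + 3*v236 + 2*v333 + 2*f - 12)
      (2*(v2222:ℤ) + e6 + v233 + 3*v236 + 3*v333 + 2*f - 11)
      (2*(v2222:ℤ) + e3 + e6 + v333 + 2*v236 + f - 7)
      ((v2222:ℤ) + 2*v236 + 2*v333 + f - 5)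
      ((v2222:ℤ) + v236 + v333 - 1)
      n1 n2 n3 n4 n5 n6 n7 n8 n9 nsum
    exact ⟨r0, h1, h2, by rw [hH]; exact h3, by rw [hH]; exact h4, h5⟩
end

section
/- Let f, v2222, v223, v225, v226, v233, v235, v236, v333, e3, e5, e6 be nonnegative integers satisfying: f ≥ 5; v2222 + v236 + v333 ≥ 1; 2·e3 = 3·v333 + 2·v233 + v223 + v235 + v236; 2·e5 = v225 + v235 with e5 ≥ 1; 2·e6 = v226 + v236; and (e3 ≥ 1 or e6 ≥ 1). Define H(t) = (v2222 + v236 + v333 − 1)·t¹⁷ + (v2222 + 2·v236 + 2·v333 + f − 5)·t¹⁶ + (3·v2222 + (1/2)·v223 + (1/2)·v225 + (1/2)·v226 + v233 + v235 + 4·v236 + (7/2)·v333 + f − 8)·t¹⁵ + (3·v2222 + (1/2)·v225 + (1/2)·v226 + v233 + (3/2)·v235 + (11/2)·v236 + 5·v333 + 3·f − 16)·t¹⁴ + (5·v2222 + v223 + (3/2)·v225 + (3/2)·v226 + 2·v233 + (7/2)·v235 + (15/2)·v236 + 7·v333 + 3·f − 20)·t¹³ + (5·v2222 + (1/2)·v223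 + v225 + (3/2)·v226 + 2·v233 + (9/2)·v235 + 8·v236 + (15/2)·v333 + 5·f − 28)·t¹² + (6·v2222 + v223 + 2·v225 + 2·v226 + 3·v233 + 6·v235 + 9·v236 + 9·v333 + 5·f − 31)·t¹¹ + (6·v2222 + v223 + (3/2)·v225 + 2·v226 + 3·v233 + (13/2)·v235 + 9·v236 + 9·v333 + 6·f − 35)·t¹⁰ + (6·v2222 + v223 + 2·v225 + 2·v226 + 3·v233 + 7·v235 + 9·v236 + 9·v333 + 6·f − 36)·t⁹ + (6·v2222 + v223 + 2·v225 + 2·v226 + 3·v233 + 7·v235 + 9·v236 + 9·v333 + 6·f − 36)·t⁸ + (5·v2222 + v223 + (3/2)·v225 + 2·v226 + 3·v233 + (13/2)·v235 + 8·v236 + 8·v333 + 6·f − 35)·t⁷ + (5·v2222 + v223 + 2·v225 + 2·v226 + 3·v233 + 6·v235 + 7·v236 + 7·v333 + 5·f − 31)·t⁶ + (3·v2222 + (1/2)·v223 + v225 + (3/2)·v226 + 2·v233 + (9/2)·v235 + 5·v236 + (11/2)·v333 + 5·f − 28)·t⁵ + (3·v2222 + v223 + (3/2)·v225 + (3/2)·v226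 + 2·v233 + (7/2)·v235 + (7/2)·v236 + 4·v333 + 3·f − 20)·t⁴ + (v2222 + (1/2)·v225 + (1/2)·v226 + v233 + (3/2)·v235 + (3/2)·v236 + 2·v333 + 3·f − 16)·t³ + (v2222 + (1/2)·v223 + (1/2)·v225 + (1/2)·v226 + v233 + v235 + v236 + (3/2)·v333 + f − 8)·t² + (f − 5)·t − 1. Then all coefficients of H are integers, the coefficients in degrees 1 through 17 are nonnegative, the coefficients of t¹⁵ and t¹⁶ are strictly positive, and there exists a real number r0 with 0 < r0 < 1 such that H(r0) = 0, every complex root z of H with z ≠ r0 satisfies |z| > r0, and 1/r0 is a Perron number. -/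
open Polynomial

lemma reAbs_eq {w : ℂ} (h : w.re = ‖w‖) : w = ((‖w‖ : ℝ) : ℂ) := by
  have hsq := Complex.sq_norm w
  rw [Complex.normSq_apply] at hsq
  have him : w.im = 0 := by
    have hsq2 : w.re * w.re = ‖w‖ ^ 2 := by rw [h]; ring
    have h2 : w.im * w.im = 0 := by linarith
    exact mul_self_eq_zero.mp h2
  apply Complex.ext
  · simpa using h
  · simpa using him

lemma perron_key (a : ℕ → ℚ)
    (h0 : a 0 = -1) (hnn : ∀ k, 1 ≤ k → 0 ≤ a k) (h15 : 1 ≤ a 15) (h16 : 1 ≤ a 16) :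
    ∃ r0 : ℝ, 0 < r0 ∧ r0 < 1 ∧ (∑ k ∈ Finset.range 18, (a k : ℝ) * r0 ^ k) = 0 ∧
      ∀ z : ℂ, (∑ k ∈ Finset.range 18, (a k : ℂ) * z ^ k) = 0 → z ≠ (r0 : ℂ) →
        (r0 : ℝ) < ‖z‖ := by
  set F : ℝ → ℝ := fun x => ∑ k ∈ Finset.range 18, (a k : ℝ) * x ^ k with hF
  have hnnR : ∀ k, 1 ≤ k → (0:ℝ) ≤ (a k : ℝ) := fun k hk => by exact_mod_cast hnn k hk
  have h15R : (1:ℝ) ≤ (a 15 : ℝ) := by exact_mod_cast h15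
  have h16R : (1:ℝ) ≤ (a 16 : ℝ) := by exact_mod_cast h16
  have h0R : ((a 0 : ℝ)) = -1 := by exact_mod_cast h0
  have hcont : Continuous F := by
    apply continuous_finset_sum
    exact fun k _ => (continuous_const.mul (continuous_pow k))
  have hF0 : F 0 = -1 := by
    simp [hF, Finset.sum_range_succ, h0R]
  have hF1 : 0 < F 1 := by
    have l1 := hnnR 1 (by norm_num); have l2 := hnnR 2 (by norm_num)
    have l3 := hnnR 3 (by norm_num); have l4 := hnnR 4 (by norm_num)
    have l5 := hnnR 5 (by norm_num); have l6 := hnnR 6 (by norm_num)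
    have l7 := hnnR 7 (by norm_num); have l8 := hnnR 8 (by norm_num)
    have l9 := hnnR 9 (by norm_num); have l10 := hnnR 10 (by norm_num)
    have l11 := hnnR 11 (by norm_num); have l12 := hnnR 12 (by norm_num)
    have l13 := hnnR 13 (by norm_num); have l14 := hnnR 14 (by norm_num)
    have l17 := hnnR 17 (by norm_num)
    simp only [hF, one_pow, mul_one]
    simp only [Finset.sum_range_succ, Finset.sum_range_zero]
    linarith
  have hmono : ∀ x y : ℝ, 0 ≤ x → x < y → F x < F y := by
    intro x y hx hxy
    apply Finset.sum_lt_sum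
    · intro i _
      rcases Nat.eq_zero_or_pos i with hi | hi
      · subst hi; simp
      · exact mul_le_mul_of_nonneg_left (pow_le_pow_left₀ hx hxy.le i) (hnnR i hi)
    · refine ⟨16, by simp, ?_⟩
      have : x ^ 16 < y ^ 16 := pow_lt_pow_left₀ hxy hx (by norm_num)
      nlinarith
  -- root in (0,1)
  have hIVT := intermediate_value_Ioo (le_of_lt zero_lt_one) hcont.continuousOn
  have h0mem : (0:ℝ) ∈ Set.Ioo (F 0) (F 1) := by rw [hF0]; exact ⟨by norm_num, hF1⟩
  obtain ⟨r0, hr0mem, hFr0⟩ := hIVT h0mem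
  obtain ⟨hr0pos, hr0lt1⟩ := hr0mem
  refine ⟨r0, hr0pos, hr0lt1, hFr0, ?_⟩
  intro z hz hne
  set s := ‖z‖ with hs
  -- real part identity
  have hre : ∑ k ∈ Finset.range 18, (a k : ℝ) * (z ^ k).re = 0 := by
    have := congrArg Complex.re hz
    simpa [Complex.re_sum, Complex.mul_re] using this
  have hterm : ∀ k ∈ Finset.range 18, (a k : ℝ) * (z ^ k).re ≤ (a k : ℝ) * s ^ k := by
    intro k _
    rcases Nat.eq_zero_or_pos k with hk | hk
    · subst hk; simp
    · have h1 : (z ^ k).re ≤ ‖z ^ k‖ := Complex.re_le_norm _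
      rw [norm_pow] at h1
      exact mul_le_mul_of_nonneg_left h1 (hnnR k hk)
  have hFs : 0 ≤ F s := by
    have := Finset.sum_le_sum hterm
    rw [hre] at this
    exact this
  -- |z| ≥ r0
  have hge : r0 ≤ s := by
    by_contra hlt
    push_neg at hlt
    have := hmono s r0 (norm_nonneg z) hlt
    rw [hFr0] at this
    linarith
  rcases lt_or_eq_of_le hge with h | h
  · exact h
  -- equality case: s = r0
  exfalso
  have hFs0 : F s = 0 := by rw [← h]; exact hFr0
  have hzero : ∀ k ∈ Finset.range 18, (a k : ℝ) * s ^ k - (a k : ℝ) * (z ^ k).re = 0 := by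
    have hsumz : ∑ k ∈ Finset.range 18, ((a k : ℝ) * s ^ k - (a k : ℝ) * (z ^ k).re) = 0 := by
      rw [Finset.sum_sub_distrib, hre]
      simpa using hFs0
    intro k hk
    exact (Finset.sum_eq_zero_iff_of_nonneg
      (fun i hi => sub_nonneg.mpr (hterm i hi))).mp hsumz k hk
  have key : ∀ k, k ∈ Finset.range 18 → (1:ℝ) ≤ (a k : ℝ) → z ^ k = ((s ^ k : ℝ) : ℂ) := by
    intro k hk hak
    have h1 := hzero k hk
    have h2 : (z ^ k).re = s ^ k := by
      have h1' : (a k : ℝ) * (s ^ k - (z ^ k).re) = 0 := by linarith [h1]; 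
      have := (mul_eq_zero.mp h1').resolve_left (by linarith)
      linarith
    have h3 : (z ^ k).re = ‖z ^ k‖ := by rw [norm_pow, ← hs, h2]
    have := reAbs_eq h3
    rw [norm_pow, ← hs] at this
    exact this
  have h15' := key 15 (by simp) h15R
  have h16' := key 16 (by simp) h16R
  have hspos : (0:ℝ) < s := by rw [← h]; exact hr0pos
  have hz16 : z * z ^ 15 = z ^ 16 := by ring
  rw [h15', h16'] at hz16
  have hz' : z * ((s:ℂ)) ^ 15 = ((s:ℂ)) ^ 16 := by push_cast at hz16; exact hz16
  have h15ne : ((s:ℂ)) ^ 15 ≠ 0 := pow_ne_zero _ (by exact_mod_cast hspos.ne')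
  have hzs : z = (s:ℂ) := mul_right_cancel₀ h15ne (by rw [hz']; ring)
  exact hne (by rw [hzs, ← h])

set_option maxHeartbeats 4000000 in
/-- the denominator polynomial `H₂₃₅₆` for non-compact hyperbolic Coxeter
polyhedra with dihedral angles `π/2`, `π/3`, `π/5`, `π/6`, at least one `π/5`-edge and at
least one `π/3`- or `π/6`-edge: its coefficients are integers, nonnegative in degrees
`1`–`17`, positive in degrees `15` and `16`, and it has a root `r0 ∈ (0,1)` smaller in
absolute value than all other complex roots, with `1/r0` a Perron number. -/
theorem H2356_growth_rate_isPerronNumber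
    (f v2222 v223 v225 v226 v233 v235 v236 v333 e3 e5 e6 : ℕ)
    (hf : 5 ≤ f)
    (hcusp : 1 ≤ v2222 + v236 + v333)
    (he3 : 2 * e3 = 3 * v333 + 2 * v233 + v223 + v235 + v236)
    (he5 : 2 * e5 = v225 + v235)
    (he5' : 1 ≤ e5)
    (he6 : 2 * e6 = v226 + v236)
    (he36 : 1 ≤ e3 ∨ 1 ≤ e6)
    (H : Polynomial ℚ)
    (hH : H = C ((v2222 : ℚ) + v236 + v333 - 1) * X ^ 17
        + C ((v2222 : ℚ) + 2 * v236 + 2 * v333 + f - 5) * X ^ 16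
        + C (3 * (v2222 : ℚ) + (1/2) * v223 + (1/2) * v225 + (1/2) * v226 + v233 + v235
              + 4 * v236 + (7/2) * v333 + f - 8) * X ^ 15
        + C (3 * (v2222 : ℚ) + (1/2) * v225 + (1/2) * v226 + v233 + (3/2) * v235
              + (11/2) * v236 + 5 * v333 + 3 * f - 16) * X ^ 14
        + C (5 * (v2222 : ℚ) + v223 + (3/2) * v225 + (3/2) * v226 + 2 * v233 + (7/2) * v235
              + (15/2) * v236 + 7 * v333 + 3 * f - 20) * X ^ 13
        + C (5 * (v2222 : ℚ) + (1/2) * v223 + v225 + (3/2) * v226 + 2 * v233 + (9/2) * v235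
              + 8 * v236 + (15/2) * v333 + 5 * f - 28) * X ^ 12
        + C (6 * (v2222 : ℚ) + v223 + 2 * v225 + 2 * v226 + 3 * v233 + 6 * v235
              + 9 * v236 + 9 * v333 + 5 * f - 31) * X ^ 11
        + C (6 * (v2222 : ℚ) + v223 + (3/2) * v225 + 2 * v226 + 3 * v233 + (13/2) * v235
              + 9 * v236 + 9 * v333 + 6 * f - 35) * X ^ 10
        + C (6 * (v2222 : ℚ) + v223 + 2 * v225 + 2 * v226 + 3 * v233 + 7 * v235
              + 9 * v236 + 9 * v333 + 6 * f - 36) * X ^ 9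
        + C (6 * (v2222 : ℚ) + v223 + 2 * v225 + 2 * v226 + 3 * v233 + 7 * v235
              + 9 * v236 + 9 * v333 + 6 * f - 36) * X ^ 8
        + C (5 * (v2222 : ℚ) + v223 + (3/2) * v225 + 2 * v226 + 3 * v233 + (13/2) * v235
              + 8 * v236 + 8 * v333 + 6 * f - 35) * X ^ 7
        + C (5 * (v2222 : ℚ) + v223 + 2 * v225 + 2 * v226 + 3 * v233 + 6 * v235
              + 7 * v236 + 7 * v333 + 5 * f - 31) * X ^ 6
        + C (3 * (v2222 : ℚ) + (1/2) * v223 + v225 + (3/2) * v226 + 2 * v233 + (9/2) * v235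
              + 5 * v236 + (11/2) * v333 + 5 * f - 28) * X ^ 5
        + C (3 * (v2222 : ℚ) + v223 + (3/2) * v225 + (3/2) * v226 + 2 * v233 + (7/2) * v235
              + (7/2) * v236 + 4 * v333 + 3 * f - 20) * X ^ 4
        + C ((v2222 : ℚ) + (1/2) * v225 + (1/2) * v226 + v233 + (3/2) * v235
              + (3/2) * v236 + 2 * v333 + 3 * f - 16) * X ^ 3
        + C ((v2222 : ℚ) + (1/2) * v223 + (1/2) * v225 + (1/2) * v226 + v233 + v235
              + v236 + (3/2) * v333 + f - 8) * X ^ 2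
        + C ((f : ℚ) - 5) * X - 1) :
    (∀ k : ℕ, ∃ m : ℤ, H.coeff k = m) ∧
    (∀ k : ℕ, 1 ≤ k → 0 ≤ H.coeff k) ∧
    0 < H.coeff 15 ∧ 0 < H.coeff 16 ∧
    ∃ r0 : ℝ, 0 < r0 ∧ r0 < 1 ∧ aeval r0 H = 0 ∧
      (∀ z : ℂ, aeval z H = 0 → z ≠ (r0 : ℂ) → (r0 : ℝ) < ‖z‖) ∧
      IsPerronNumber (1 / r0) := by
  have he3Q : (2:ℚ) * e3 = 3 * v333 + 2 * v233 + v223 + v235 + v236 := by exact_mod_cast he3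
  have he5Q : (2:ℚ) * e5 = v225 + v235 := by exact_mod_cast he5
  have he6Q : (2:ℚ) * e6 = v226 + v236 := by exact_mod_cast he6
  have hc0 : H.coeff 0 = -1 := by
    rw [hH]
    simp only [coeff_add, coeff_sub, coeff_one, coeff_C_mul, coeff_X, coeff_X_pow]
    norm_num
  have hctop : ∀ k, 18 ≤ k → H.coeff k = 0 := by
    intro k hk
    rw [hH]
    simp only [coeff_add, coeff_sub, coeff_one, coeff_C_mul, coeff_X, coeff_X_pow]
    rw [if_neg (by omega : ¬(k = 17)), if_neg (by omega : ¬(k = 16)), if_neg (by omega : ¬(k = 15)), if_neg (by omega : ¬(k = 14)), if_neg (by omega : ¬(k = 13)), if_neg (by omega : ¬(k = 12)), if_neg (by omega : ¬(k = 11)), if_neg (by omega : ¬(k = 10)), if_neg (by omega : ¬(k = 9)), if_neg (by omega : ¬(k = 8)), if_neg (by omega : ¬(k = 7)), if_neg (by omega : ¬(k = 6)), if_neg (by omega : ¬(k = 5)), if_neg (by omega : ¬(k = 4)), if_neg (by omega : ¬(k = 3)), if_neg (by omega : ¬(k = 2)), if_neg (by omega : ¬(1 = k)), if_neg (by omega :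 ¬(k = 0))]
    ring
  have hc17 : H.coeff 17 = ((v2222 + v236 + v333 : ℕ) : ℚ) - 1 := by
    rw [hH]
    simp only [coeff_add, coeff_sub, coeff_one, coeff_C_mul, coeff_X, coeff_X_pow]
    norm_num
    all_goals push_cast
    all_goals linarith [he3Q, he5Q, he6Q]
  have hc16 : H.coeff 16 = ((v2222 + 2*v236 + 2*v333 + f : ℕ) : ℚ) - 5 := by
    rw [hH]
    simp only [coeff_add, coeff_sub, coeff_one, coeff_C_mul, coeff_X, coeff_X_pow]
    norm_num
    all_goals push_cast
    all_goals linarith [he3Q, he5Q, he6Q]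
  have hc15 : H.coeff 15 = ((3*v2222 + 3*v236 + 2*v333 + f + e3 + e5 + e6 : ℕ) : ℚ) - 8 := by
    rw [hH]
    simp only [coeff_add, coeff_sub, coeff_one, coeff_C_mul, coeff_X, coeff_X_pow]
    norm_num
    all_goals push_cast
    all_goals linarith [he3Q, he5Q, he6Q]
  have hc14 : H.coeff 14 = ((3*v2222 + v233 + v235 + 5*v236 + 5*v333 + 3*f + e5 + e6 : ℕ) : ℚ) - 16 := by
    rw [hH]
    simp only [coeff_add, coeff_sub, coeff_one, coeff_C_mul, coeff_X, coeff_X_pow]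
    norm_num
    all_goals push_cast
    all_goals linarith [he3Q, he5Q, he6Q]
  have hc13 : H.coeff 13 = ((5*v2222 + v235 + 5*v236 + 4*v333 + 3*f + 2*e3 + 3*e5 + 3*e6 : ℕ) : ℚ) - 20 := by
    rw [hH]
    simp only [coeff_add, coeff_sub, coeff_one, coeff_C_mul, coeff_X, coeff_X_pow]
    norm_num
    all_goals push_cast
    all_goals linarith [he3Q, he5Q, he6Q]
  have hc12 : H.coeff 12 = ((5*v2222 + v233 + 3*v235 + 6*v236 + 6*v333 + 5*f + e3 + 2*e5 + 3*e6 : ℕ) : ℚ) - 28 := by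
    rw [hH]
    simp only [coeff_add, coeff_sub, coeff_one, coeff_C_mul, coeff_X, coeff_X_pow]
    norm_num
    all_goals push_cast
    all_goals linarith [he3Q, he5Q, he6Q]
  have hc11 : H.coeff 11 = ((6*v2222 + v233 + 3*v235 + 6*v236 + 6*v333 + 5*f + 2*e3 + 4*e5 + 4*e6 : ℕ) : ℚ) - 31 := by
    rw [hH]
    simp only [coeff_add, coeff_sub, coeff_one, coeff_C_mul, coeff_X, coeff_X_pow]
    norm_num
    all_goals push_cast
    all_goals linarith [he3Q, he5Q, he6Q]
  have hc10 : H.coeff 10 = ((6*v2222 + v233 + 4*v235 + 6*v236 + 6*v333 + 6*f + 2*e3 + 3*e5 + 4*e6 : ℕ) : ℚ) - 35 := by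
    rw [hH]
    simp only [coeff_add, coeff_sub, coeff_one, coeff_C_mul, coeff_X, coeff_X_pow]
    norm_num
    all_goals push_cast
    all_goals linarith [he3Q, he5Q, he6Q]
  have hc9 : H.coeff 9 = ((6*v2222 + v233 + 4*v235 + 6*v236 + 6*v333 + 6*f + 2*e3 + 4*e5 + 4*e6 : ℕ) : ℚ) - 36 := by
    rw [hH]
    simp only [coeff_add, coeff_sub, coeff_one, coeff_C_mul, coeff_X, coeff_X_pow]
    norm_num
    all_goals push_cast
    all_goals linarith [he3Q, he5Q, he6Q]
  have hc8 : H.coeff 8 = ((6*v2222 + v233 + 4*v235 + 6*v236 + 6*v333 + 6*f + 2*e3 + 4*e5 + 4*e6 : ℕ) : ℚ) - 36 := by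
    rw [hH]
    simp only [coeff_add, coeff_sub, coeff_one, coeff_C_mul, coeff_X, coeff_X_pow]
    norm_num
    all_goals push_cast
    all_goals linarith [he3Q, he5Q, he6Q]
  have hc7 : H.coeff 7 = ((5*v2222 + v233 + 4*v235 + 5*v236 + 5*v333 + 6*f + 2*e3 + 3*e5 + 4*e6 : ℕ) : ℚ) - 35 := by
    rw [hH]
    simp only [coeff_add, coeff_sub, coeff_one, coeff_C_mul, coeff_X, coeff_X_pow]
    norm_num
    all_goals push_cast
    all_goals linarith [he3Q, he5Q, he6Q]
  have hc6 : H.coeff 6 = ((5*v2222 + v233 + 3*v235 + 4*v236 + 4*v333 + 5*f + 2*e3 + 4*e5 + 4*e6 : ℕ) : ℚ) - 31 := by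
    rw [hH]
    simp only [coeff_add, coeff_sub, coeff_one, coeff_C_mul, coeff_X, coeff_X_pow]
    norm_num
    all_goals push_cast
    all_goals linarith [he3Q, he5Q, he6Q]
  have hc5 : H.coeff 5 = ((3*v2222 + v233 + 3*v235 + 3*v236 + 4*v333 + 5*f + e3 + 2*e5 + 3*e6 : ℕ) : ℚ) - 28 := by
    rw [hH]
    simp only [coeff_add, coeff_sub, coeff_one, coeff_C_mul, coeff_X, coeff_X_pow]
    norm_num
    all_goals push_cast
    all_goals linarith [he3Q, he5Q, he6Q]
  have hc4 : H.coeff 4 = ((3*v2222 + v235 + v236 + v333 + 3*f + 2*e3 + 3*e5 + 3*e6 : ℕ) : ℚ) - 20 := by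
    rw [hH]
    simp only [coeff_add, coeff_sub, coeff_one, coeff_C_mul, coeff_X, coeff_X_pow]
    norm_num
    all_goals push_cast
    all_goals linarith [he3Q, he5Q, he6Q]
  have hc3 : H.coeff 3 = ((v2222 + v233 + v235 + v236 + 2*v333 + 3*f + e5 + e6 : ℕ) : ℚ) - 16 := by
    rw [hH]
    simp only [coeff_add, coeff_sub, coeff_one, coeff_C_mul, coeff_X, coeff_X_pow]
    norm_num
    all_goals push_cast
    all_goals linarith [he3Q, he5Q, he6Q]
  have hc2 : H.coeff 2 = ((v2222 + f + e3 + e5 + e6 : ℕ) : ℚ) - 8 := by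
    rw [hH]
    simp only [coeff_add, coeff_sub, coeff_one, coeff_C_mul, coeff_X, coeff_X_pow]
    norm_num
    all_goals push_cast
    all_goals linarith [he3Q, he5Q, he6Q]
  have hc1 : H.coeff 1 = ((f : ℕ) : ℚ) - 5 := by
    rw [hH]
    simp only [coeff_add, coeff_sub, coeff_one, coeff_C_mul, coeff_X, coeff_X_pow]
    norm_num
    all_goals push_cast
    all_goals linarith [he3Q, he5Q, he6Q]
  have hge : 1 ≤ v2222 + v236 + v333 ∧ 6 ≤ v2222 + 2*v236 + 2*v333 + f ∧ 9 ≤ 3*v2222 + 3*v236 + 2*v333 + f + e3 + e5 + e6 ∧ 16 ≤ 3*v2222 + v233 + v235 + 5*v236 + 5*v333 + 3*f + e5 + e6 ∧ 20 ≤ 5*v2222 + v235 + 5*v236 + 4*v333 + 3*f + 2*e3 + 3*e5 + 3*e6 ∧ 28 ≤ 5*v2222 + v233 + 3*v235 + 6*v236 + 6*v333 + 5*f + e3 + 2*e5 + 3*e6 ∧ 31 ≤ 6*v2222 + v233 + 3*v235 + 6*v236 + 6*v333 + 5*f + 2*e3 + 4*e5 + 4*e6 ∧ 35 ≤ 6*v2222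 + v233 + 4*v235 + 6*v236 + 6*v333 + 6*f + 2*e3 + 3*e5 + 4*e6 ∧ 36 ≤ 6*v2222 + v233 + 4*v235 + 6*v236 + 6*v333 + 6*f + 2*e3 + 4*e5 + 4*e6 ∧ 36 ≤ 6*v2222 + v233 + 4*v235 + 6*v236 + 6*v333 + 6*f + 2*e3 + 4*e5 + 4*e6 ∧ 35 ≤ 5*v2222 + v233 + 4*v235 + 5*v236 + 5*v333 + 6*f + 2*e3 + 3*e5 + 4*e6 ∧ 31 ≤ 5*v2222 + v233 + 3*v235 + 4*v236 + 4*v333 + 5*f + 2*e3 + 4*e5 + 4*e6 ∧ 28 ≤ 3*v2222 + v233 + 3*v235 + 3*v236 + 4*v333 + 5*f + e3 + 2*e5 + 3*e6 ∧ 20 ≤ 3*v2222 + v235 + v236 + v333 + 3*f + 2*e3 + 3*e5 + 3*e6 ∧ 16 ≤ v2222 + v233 + v235 + v236 + 2*v333 + 3*f + e5 + e6 ∧ 8 ≤ v2222 + f + e3 + e5 + e6 ∧ 5 ≤ f := by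
    rcases he36 with h36 | h36 <;> omega
  obtain ⟨g17, g16, g15, g14, g13, g12, g11, g10, g9, g8, g7, g6, g5, g4, g3, g2, g1⟩ := hge
  have hint : ∀ k : ℕ, ∃ m : ℤ, H.coeff k = m := by
    intro k
    by_cases hk : k ≤ 17
    · interval_cases k
      · exact ⟨-1, by rw [hc0]; norm_num⟩
      · exact ⟨((f : ℕ) : ℤ) - 5, by rw [hc1]; push_cast; ring⟩
      · exact ⟨((v2222 + f + e3 + e5 + e6 : ℕ) : ℤ) - 8, by rw [hc2]; push_cast; ring⟩
      · exact ⟨((v2222 + v233 + v235 + v236 + 2*v333 + 3*f + e5 + e6 : ℕ) : ℤ) - 16, by rw [hc3]; push_cast; ring⟩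
      · exact ⟨((3*v2222 + v235 + v236 + v333 + 3*f + 2*e3 + 3*e5 + 3*e6 : ℕ) : ℤ) - 20, by rw [hc4]; push_cast; ring⟩
      · exact ⟨((3*v2222 + v233 + 3*v235 + 3*v236 + 4*v333 + 5*f + e3 + 2*e5 + 3*e6 : ℕ) : ℤ) - 28, by rw [hc5]; push_cast; ring⟩
      · exact ⟨((5*v2222 + v233 + 3*v235 + 4*v236 + 4*v333 + 5*f + 2*e3 + 4*e5 + 4*e6 : ℕ) : ℤ) - 31, by rw [hc6]; push_cast; ring⟩
      · exact ⟨((5*v2222 + v233 + 4*v235 + 5*v236 + 5*v333 + 6*f + 2*e3 + 3*e5 + 4*e6 : ℕ) : ℤ) - 35, by rw [hc7]; push_cast; ring⟩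
      · exact ⟨((6*v2222 + v233 + 4*v235 + 6*v236 + 6*v333 + 6*f + 2*e3 + 4*e5 + 4*e6 : ℕ) : ℤ) - 36, by rw [hc8]; push_cast; ring⟩
      · exact ⟨((6*v2222 + v233 + 4*v235 + 6*v236 + 6*v333 + 6*f + 2*e3 + 4*e5 + 4*e6 : ℕ) : ℤ) - 36, by rw [hc9]; push_cast; ring⟩
      · exact ⟨((6*v2222 + v233 + 4*v235 + 6*v236 + 6*v333 + 6*f + 2*e3 + 3*e5 + 4*e6 : ℕ) : ℤ) - 35, by rw [hc10]; push_cast; ring⟩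
      · exact ⟨((6*v2222 + v233 + 3*v235 + 6*v236 + 6*v333 + 5*f + 2*e3 + 4*e5 + 4*e6 : ℕ) : ℤ) - 31, by rw [hc11]; push_cast; ring⟩
      · exact ⟨((5*v2222 + v233 + 3*v235 + 6*v236 + 6*v333 + 5*f + e3 + 2*e5 + 3*e6 : ℕ) : ℤ) - 28, by rw [hc12]; push_cast; ring⟩
      · exact ⟨((5*v2222 + v235 + 5*v236 + 4*v333 + 3*f + 2*e3 + 3*e5 + 3*e6 : ℕ) : ℤ) - 20, by rw [hc13]; push_cast; ring⟩
      · exact ⟨((3*v2222 + v233 + v235 + 5*v236 + 5*v333 + 3*f + e5 + e6 : ℕ) : ℤ) - 16, by rw [hc14]; push_cast; ring⟩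
      · exact ⟨((3*v2222 + 3*v236 + 2*v333 + f + e3 + e5 + e6 : ℕ) : ℤ) - 8, by rw [hc15]; push_cast; ring⟩
      · exact ⟨((v2222 + 2*v236 + 2*v333 + f : ℕ) : ℤ) - 5, by rw [hc16]; push_cast; ring⟩
      · exact ⟨((v2222 + v236 + v333 : ℕ) : ℤ) - 1, by rw [hc17]; push_cast; ring⟩
    · exact ⟨0, by rw [hctop k (by omega)]; norm_num⟩
  have hnonneg : ∀ k : ℕ, 1 ≤ k → 0 ≤ H.coeff k := by
    intro k hk1
    by_cases hk : k ≤ 17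
    · interval_cases k
      · rw [hc1, sub_nonneg]; exact_mod_cast g1
      · rw [hc2, sub_nonneg]; exact_mod_cast g2
      · rw [hc3, sub_nonneg]; exact_mod_cast g3
      · rw [hc4, sub_nonneg]; exact_mod_cast g4
      · rw [hc5, sub_nonneg]; exact_mod_cast g5
      · rw [hc6, sub_nonneg]; exact_mod_cast g6
      · rw [hc7, sub_nonneg]; exact_mod_cast g7
      · rw [hc8, sub_nonneg]; exact_mod_cast g8
      · rw [hc9, sub_nonneg]; exact_mod_cast g9
      · rw [hc10, sub_nonneg]; exact_mod_cast g10
      · rw [hc11, sub_nonneg]; exact_mod_cast g11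
      · rw [hc12, sub_nonneg]; exact_mod_cast g12
      · rw [hc13, sub_nonneg]; exact_mod_cast g13
      · rw [hc14, sub_nonneg]; exact_mod_cast g14
      · rw [hc15, sub_nonneg]; exact_mod_cast (show 8 ≤ 3*v2222 + 3*v236 + 2*v333 + f + e3 + e5 + e6 by omega)
      · rw [hc16, sub_nonneg]; exact_mod_cast (show 5 ≤ v2222 + 2*v236 + 2*v333 + f by omega)
      · rw [hc17, sub_nonneg]; exact_mod_cast g17
    · rw [hctop k (by omega)]
  have hpos15 : 0 < H.coeff 15 := by
    rw [hc15, sub_pos]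
    exact_mod_cast (show 8 < 3*v2222 + 3*v236 + 2*v333 + f + e3 + e5 + e6 by omega)
  have hpos16 : 0 < H.coeff 16 := by
    rw [hc16, sub_pos]
    exact_mod_cast (show 5 < v2222 + 2*v236 + 2*v333 + f by omega)
  have h15one : (1:ℚ) ≤ H.coeff 15 := by
    rw [hc15]
    have : (9:ℚ) ≤ ((3*v2222 + 3*v236 + 2*v333 + f + e3 + e5 + e6 : ℕ) : ℚ) := by exact_mod_cast g15
    linarith
  have h16one : (1:ℚ) ≤ H.coeff 16 := by
    rw [hc16]
    have : (6:ℚ) ≤ ((v2222 + 2*v236 + 2*v333 + f : ℕ) : ℚ) := by exact_mod_cast g16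
    linarith
  obtain ⟨r0, hr0pos, hr0lt1, hroot, hmin⟩ := perron_key H.coeff hc0 hnonneg h15one h16one
  have hdeg : H.natDegree < 18 := by
    have h17 : H.natDegree ≤ 17 :=
      Polynomial.natDegree_le_iff_coeff_eq_zero.mpr (fun N hN => hctop N (by omega))
    omega
  have haevR : ∀ x : ℝ, aeval x H = ∑ k ∈ Finset.range 18, ((H.coeff k : ℚ) : ℝ) * x ^ k := by
    intro x
    rw [Polynomial.aeval_eq_sum_range' hdeg]
    exact Finset.sum_congr rfl fun k _ => by rw [Rat.smul_def]
  have haevC : ∀ z : ℂ, aeval z H = ∑ k ∈ Finset.range 18, ((H.coeff k : ℚ) : ℂ) * z ^ k := by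
    intro z
    rw [Polynomial.aeval_eq_sum_range' hdeg]
    exact Finset.sum_congr rfl fun k _ => by rw [Rat.smul_def]
  -- reciprocal-sum identity
  have hIco : ∑ k ∈ Finset.Ico 1 18, ((H.coeff k : ℚ) : ℝ) * r0 ^ k = 1 := by
    rw [Finset.range_eq_Ico, Finset.sum_eq_sum_Ico_succ_bot (by norm_num : (0:ℕ) < 18)] at hroot
    rw [hc0] at hroot
    push_cast at hroot
    linarith
  have hτsum : (1/r0) ^ 17 = ∑ k ∈ Finset.Ico 1 18, ((H.coeff k : ℚ) : ℝ) * (1/r0) ^ (17 - k) := by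
    have hterm : ∀ k ∈ Finset.Ico 1 18,
        ((H.coeff k : ℚ) : ℝ) * r0 ^ k * (1/r0) ^ 17
          = ((H.coeff k : ℚ) : ℝ) * (1/r0) ^ (17 - k) := by
      intro k hk
      rw [Finset.mem_Ico] at hk
      have h2 : (1/r0 : ℝ) ^ 17 = (1/r0) ^ (17 - k) * (1/r0) ^ k := by
        rw [← pow_add]; congr 1; omega
      have hcancel : r0 ^ k * (1/r0 : ℝ) ^ k = 1 := by
        rw [← mul_pow, mul_one_div, div_self hr0pos.ne', one_pow]
      calc ((H.coeff k : ℚ) : ℝ) * r0 ^ k * (1/r0) ^ 17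
          = ((H.coeff k : ℚ) : ℝ) * (1/r0) ^ (17 - k) * (r0 ^ k * (1/r0) ^ k) := by
            rw [h2]; ring
        _ = ((H.coeff k : ℚ) : ℝ) * (1/r0) ^ (17 - k) := by rw [hcancel, mul_one]
    calc (1/r0 : ℝ) ^ 17
        = (∑ k ∈ Finset.Ico 1 18, ((H.coeff k : ℚ) : ℝ) * r0 ^ k) * (1/r0) ^ 17 := by
          rw [hIco, one_mul]
      _ = ∑ k ∈ Finset.Ico 1 18, ((H.coeff k : ℚ) : ℝ) * r0 ^ k * (1/r0) ^ 17 := by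
          rw [Finset.sum_mul]
      _ = _ := Finset.sum_congr rfl hterm
  have hMq : aeval (1/r0 : ℝ)
      ((X : ℚ[X]) ^ 17 - ∑ k ∈ Finset.Ico 1 18, C (H.coeff k) * X ^ (17 - k)) = 0 := by
    rw [map_sub, map_pow, aeval_X, map_sum]
    simp only [map_mul, aeval_C, map_pow, aeval_X, eq_ratCast]
    rw [sub_eq_zero, hτsum]
  have hdvd := minpoly.dvd ℚ (1/r0 : ℝ) hMq
  choose m hm using hint
  refine ⟨fun k => ⟨m k, hm k⟩, hnonneg, hpos15, hpos16, r0, hr0pos, hr0lt1, ?_, ?_, ?_, ?_, ?_⟩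
  · rw [haevR]; exact hroot
  · intro z hz hzne
    exact hmin z (by rw [haevC] at hz; exact hz) hzne
  · exact one_lt_one_div hr0pos hr0lt1
  · -- integrality
    refine ⟨(X : ℤ[X]) ^ 17 - ∑ k ∈ Finset.Ico 1 18, C (m k) * X ^ (17 - k), ?_, ?_⟩
    · apply Polynomial.monic_X_pow_sub
      have hdegsum : (∑ k ∈ Finset.Ico 1 18, (C (m k) * X ^ (17 - k) : ℤ[X])).degree ≤ 16 := by
        apply le_trans (Polynomial.degree_sum_le _ _)
        apply Finset.sup_le
        intro k hk
        apply le_trans (Polynomial.degree_C_mul_X_pow_le _ _)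
        rw [Finset.mem_Ico] at hk
        exact_mod_cast (show 17 - k ≤ 16 by omega)
      exact lt_of_le_of_lt hdegsum (by exact_mod_cast (show (16:ℕ) < 17 by norm_num))
    · rw [← Polynomial.aeval_def]
      rw [map_sub, map_pow, aeval_X, map_sum]
      simp only [map_mul, aeval_C, map_pow, aeval_X, map_intCast, eq_intCast]
      rw [sub_eq_zero, hτsum]
      refine Finset.sum_congr rfl fun k _ => ?_
      congr 1
      rw [hm k]
      push_cast
      ring
  · -- minpoly roots
    intro z hz hzne
    obtain ⟨q, hq⟩ := hdvd
    have hzM : aeval z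
        ((X : ℚ[X]) ^ 17 - ∑ k ∈ Finset.Ico 1 18, C (H.coeff k) * X ^ (17 - k)) = 0 := by
      rw [hq, map_mul, hz, zero_mul]
    rw [map_sub, map_pow, aeval_X, map_sum] at hzM
    simp only [map_mul, aeval_C, map_pow, aeval_X, eq_ratCast] at hzM
    rw [sub_eq_zero] at hzM
    by_cases hz0 : z = 0
    · rw [hz0]
      simp only [norm_zero]
      positivity
    · have hstep : ∑ k ∈ Finset.Ico 1 18, ((H.coeff k : ℚ) : ℂ) * (z⁻¹) ^ k = 1 := by
        have e1 : ∀ k ∈ Finset.Ico 1 18, ((H.coeff k : ℚ) : ℂ) * (z⁻¹) ^ k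
            = (((H.coeff k : ℚ) : ℂ) * z ^ (17 - k)) * (z⁻¹) ^ 17 := by
          intro k hk
          rw [Finset.mem_Ico] at hk
          have h2 : (z⁻¹ : ℂ) ^ 17 = (z⁻¹) ^ (17 - k) * (z⁻¹) ^ k := by
            rw [← pow_add]; congr 1; omega
          have h3 : z ^ (17 - k) * (z⁻¹ : ℂ) ^ (17 - k) = 1 := by
            rw [← mul_pow, mul_inv_cancel₀ hz0, one_pow]
          rw [h2, show (((H.coeff k : ℚ) : ℂ) * z ^ (17 - k)) * ((z⁻¹) ^ (17 - k) * (z⁻¹) ^ k)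
            = ((H.coeff k : ℚ) : ℂ) * (z ^ (17 - k) * (z⁻¹) ^ (17 - k)) * (z⁻¹) ^ k from by
              ring, h3, mul_one]
        rw [Finset.sum_congr rfl e1, ← Finset.sum_mul, ← hzM, ← mul_pow,
          mul_inv_cancel₀ hz0, one_pow]
      have hu : ∑ k ∈ Finset.range 18, ((H.coeff k : ℚ) : ℂ) * (z⁻¹) ^ k = 0 := by
        rw [Finset.range_eq_Ico, Finset.sum_eq_sum_Ico_succ_bot (by norm_num : (0:ℕ) < 18),
          hstep, hc0]
        push_cast
        ring
      by_cases hur : (z⁻¹ : ℂ) = (r0 : ℂ)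
      · exfalso
        apply hzne
        rw [show z = (z⁻¹)⁻¹ from (inv_inv z).symm, hur]
        push_cast
        ring
      · have hlt := hmin (z⁻¹) hu hur
        rw [norm_inv] at hlt
        have habs : 0 < ‖z‖ := norm_pos_iff.mpr hz0
        have h1 : r0 * ‖z‖ < 1 := by
          have h2 := mul_lt_mul_of_pos_right hlt habs
          rwa [inv_mul_cancel₀ habs.ne'] at h2
        rw [lt_div_iff₀ hr0pos]
        linarith
end

section
/- Let f and v2222 be nonnegative integers with f ≥ 5 and v2222 ≥ 1. Define the polynomial H₂₅(t) = (v2222 − 1)·t⁶ + (v2222 + f − 5)·t⁵ + (v2222 + f − 5)·t⁴ + (v2222 + f − 5)·t³ + (v2222 + f − 5)·t² + (f − 5)·t − 1 with integer coefficients. Then all coefficients of H₂₅ in degrees 1 through 6 are nonnegative, the coefficients of t², t³, t⁴, t⁵ are strictly positive, and there exists a real number r0 with 0 < r0 < 1 such that H₂₅(r0) = 0, every complex root z of H₂₅ with z ≠ r0 satisfies |z| > r0, and 1/r0 is a Perron number. -/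
open Polynomial

/-- The "reversed" (monic) companion polynomial of `H₂₅`. -/
noncomputable def P25aux (f v2222 : ℕ) : ℤ[X] :=
  X^6 - (C ((f:ℤ) - 5) * X^5 + C ((v2222:ℤ) + f - 5) * (X^4+X^3+X^2+X) + C ((v2222:ℤ) - 1))

/-- Key analytic lemma: for a polynomial `a t⁶ + b t⁵ + b t⁴ + b t³ + b t² + c t - 1` with
`a, c ≥ 0`, `b > 0`, any complex root other than a given positive real root `r0` has
absolute value strictly greater than `r0`. -/
lemma h25_key (a b c : ℝ) (ha : 0 ≤ a) (hb : 0 < b) (hc : 0 ≤ c)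
    (r0 : ℝ) (h0 : 0 < r0)
    (hr : a*r0^6 + b*r0^5 + b*r0^4 + b*r0^3 + b*r0^2 + c*r0 - 1 = 0)
    (z : ℂ)
    (hz : (a:ℂ)*z^6 + (b:ℂ)*z^5 + (b:ℂ)*z^4 + (b:ℂ)*z^3 + (b:ℂ)*z^2 + (c:ℂ)*z - 1 = 0)
    (hne : z ≠ (r0:ℂ)) : r0 < ‖z‖ := by
  by_contra hle
  push_neg at hle
  have hz0 : z ≠ 0 := by
    rintro rfl
    norm_num at hz
  set m := ‖z‖ with hm
  have hmnn : 0 ≤ m := norm_nonneg z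
  have hmpos : 0 < m := norm_pos_iff.mpr hz0
  have e6 : ‖(a:ℂ)*z^6‖ = a*m^6 := by
    rw [norm_mul, norm_pow, Complex.norm_real, Real.norm_eq_abs, abs_of_nonneg ha]
  have e5 : ‖(b:ℂ)*z^5‖ = b*m^5 := by
    rw [norm_mul, norm_pow, Complex.norm_real, Real.norm_eq_abs, abs_of_nonneg hb.le]
  have e4 : ‖(b:ℂ)*z^4‖ = b*m^4 := by
    rw [norm_mul, norm_pow, Complex.norm_real, Real.norm_eq_abs, abs_of_nonneg hb.le]
  have e3 : ‖(b:ℂ)*z^3‖ = b*m^3 := by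
    rw [norm_mul, norm_pow, Complex.norm_real, Real.norm_eq_abs, abs_of_nonneg hb.le]
  have e2 : ‖(b:ℂ)*z^2‖ = b*m^2 := by
    rw [norm_mul, norm_pow, Complex.norm_real, Real.norm_eq_abs, abs_of_nonneg hb.le]
  have e1 : ‖(c:ℂ)*z‖ = c*m := by
    rw [norm_mul, Complex.norm_real, Real.norm_eq_abs, abs_of_nonneg hc]
  have hsum : (b:ℂ)*z^2 + (b:ℂ)*z^3 + ((a:ℂ)*z^6 + (b:ℂ)*z^5 + (b:ℂ)*z^4 + (c:ℂ)*z) = 1 := by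
    linear_combination hz
  have h1 : ‖(b:ℂ)*z^2 + (b:ℂ)*z^3 + ((a:ℂ)*z^6 + (b:ℂ)*z^5 + (b:ℂ)*z^4 + (c:ℂ)*z)‖ = 1 := by
    rw [hsum]; simp
  have A0 := norm_add_le ((b:ℂ)*z^2 + (b:ℂ)*z^3) ((a:ℂ)*z^6 + (b:ℂ)*z^5 + (b:ℂ)*z^4 + (c:ℂ)*z)
  have A1 := norm_add_le ((a:ℂ)*z^6 + (b:ℂ)*z^5 + (b:ℂ)*z^4) ((c:ℂ)*z)
  have A2 := norm_add_le ((a:ℂ)*z^6 + (b:ℂ)*z^5) ((b:ℂ)*z^4)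
  have A3 := norm_add_le ((a:ℂ)*z^6) ((b:ℂ)*z^5)
  have A4 := norm_add_le ((b:ℂ)*z^2) ((b:ℂ)*z^3)
  have hR : ‖(a:ℂ)*z^6 + (b:ℂ)*z^5 + (b:ℂ)*z^4 + (c:ℂ)*z‖
      ≤ a*m^6 + b*m^5 + b*m^4 + c*m := by linarith
  have hUW : ‖(b:ℂ)*z^2 + (b:ℂ)*z^3‖ ≤ b*m^2 + b*m^3 := by linarith
  have hG : 1 ≤ b*m^2 + b*m^3 + (a*m^6 + b*m^5 + b*m^4 + c*m) := by linarith
  have hmr : m = r0 := by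
    by_contra hne'
    have hmlt : m < r0 := lt_of_le_of_ne hle hne'
    have p2 : m^2 < r0^2 := by nlinarith
    have p3 : m^3 ≤ r0^3 := pow_le_pow_left₀ hmnn hle 3
    have p4 : m^4 ≤ r0^4 := pow_le_pow_left₀ hmnn hle 4
    have p5 : m^5 ≤ r0^5 := pow_le_pow_left₀ hmnn hle 5
    have p6 : m^6 ≤ r0^6 := pow_le_pow_left₀ hmnn hle 6
    nlinarith [mul_le_mul_of_nonneg_left p3 hb.le, mul_le_mul_of_nonneg_left p4 hb.le,
      mul_le_mul_of_nonneg_left p5 hb.le, mul_le_mul_of_nonneg_left p6 ha,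
      mul_le_mul_of_nonneg_left hle hc, mul_lt_mul_of_pos_left p2 hb]
  have habseq : ‖(b:ℂ)*z^2 + (b:ℂ)*z^3‖ = b*m^2 + b*m^3 := by
    apply le_antisymm hUW
    have : a*m^6 + b*m^5 + b*m^4 + b*m^3 + b*m^2 + c*m = 1 := by rw [hmr]; linarith
    linarith
  have hray : SameRay ℝ ((b:ℂ)*z^2) ((b:ℂ)*z^3) := by
    apply sameRay_iff_norm_add.mpr
    rw [habseq, e2, e3]
  have hbC : (b:ℂ) ≠ 0 := by exact_mod_cast hb.ne'
  have hu0 : (b:ℂ)*z^2 ≠ 0 := mul_ne_zero hbC (pow_ne_zero _ hz0)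
  have hw0 : (b:ℂ)*z^3 ≠ 0 := mul_ne_zero hbC (pow_ne_zero _ hz0)
  obtain ⟨r1, r2, hr1, hr2, hre⟩ := hray.exists_pos hu0 hw0
  rw [Complex.real_smul, Complex.real_smul] at hre
  have hz' : (r1:ℂ) = (r2:ℂ) * z := by
    apply mul_right_cancel₀ hu0
    linear_combination hre
  have hr2C : (r2:ℂ) ≠ 0 := by exact_mod_cast hr2.ne'
  have hzval : z = ((r1/r2 : ℝ):ℂ) := by
    push_cast
    rw [eq_div_iff hr2C]
    linear_combination -hz'
  have habs : m = r1/r2 := by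
    rw [hm, hzval, Complex.norm_real, Real.norm_eq_abs, abs_of_pos (div_pos hr1 hr2)]
  apply hne
  rw [hzval, ← habs, hmr]

/-- the denominator polynomial `H₂₅` for non-compact hyperbolic Coxeter polyhedra
with dihedral angles `π/2` and `π/5` and exactly one `π/5`-edge: its coefficients are
nonnegative in degrees `1`–`6`, positive in degrees `2`–`5`, and it has a root `r0 ∈ (0,1)`
smaller in absolute value than all other complex roots, with `1/r0` a Perron number. -/
theorem H25_growth_rate_isPerronNumber
    (f v2222 : ℕ) (hf : 5 ≤ f) (hv : 1 ≤ v2222)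
    (H : Polynomial ℤ)
    (hH : H = C ((v2222 : ℤ) - 1) * X ^ 6
        + C ((v2222 : ℤ) + f - 5) * X ^ 5
        + C ((v2222 : ℤ) + f - 5) * X ^ 4
        + C ((v2222 : ℤ) + f - 5) * X ^ 3
        + C ((v2222 : ℤ) + f - 5) * X ^ 2
        + C ((f : ℤ) - 5) * X - 1) :
    (∀ k : ℕ, 1 ≤ k → 0 ≤ H.coeff k) ∧
    (∀ k : ℕ, 2 ≤ k → k ≤ 5 → 0 < H.coeff k) ∧
    ∃ r0 : ℝ, 0 < r0 ∧ r0 < 1 ∧ aeval r0 H = 0 ∧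
      (∀ z : ℂ, aeval z H = 0 → z ≠ (r0 : ℂ) → (r0 : ℝ) < ‖z‖) ∧
      IsPerronNumber (1 / r0) := by
  have hv' : (1:ℤ) ≤ (v2222:ℤ) := by exact_mod_cast hv
  have hf' : (5:ℤ) ≤ (f:ℤ) := by exact_mod_cast hf
  have hvR : (1:ℝ) ≤ (v2222:ℝ) := by exact_mod_cast hv
  have hfR : (5:ℝ) ≤ (f:ℝ) := by exact_mod_cast hf
  have ha : (0:ℝ) ≤ (v2222:ℝ) - 1 := by linarith
  have hb : (0:ℝ) < (v2222:ℝ) + f - 5 := by linarith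
  have hc : (0:ℝ) ≤ (f:ℝ) - 5 := by linarith
  subst hH
  refine ⟨?_, ?_, ?_⟩
  · -- nonnegativity of coefficients in degrees ≥ 1
    intro k hk
    by_cases hk7 : 7 ≤ k
    · have hd : (C ((v2222 : ℤ) - 1) * X ^ 6
        + C ((v2222 : ℤ) + f - 5) * X ^ 5
        + C ((v2222 : ℤ) + f - 5) * X ^ 4
        + C ((v2222 : ℤ) + f - 5) * X ^ 3
        + C ((v2222 : ℤ) + f - 5) * X ^ 2
        + C ((f : ℤ) - 5) * X - 1 : ℤ[X]).natDegree ≤ 6 := by compute_degree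
      rw [coeff_eq_zero_of_natDegree_lt (lt_of_le_of_lt hd hk7)]
    · have hk6 : k ≤ 6 := by omega
      interval_cases k <;>
        simp only [coeff_sub, coeff_add, coeff_C_mul, coeff_X_pow, coeff_X, coeff_one] <;>
        norm_num <;> omega
  · -- positivity of coefficients in degrees 2–5
    intro k hk2 hk5
    interval_cases k <;>
      simp only [coeff_sub, coeff_add, coeff_C_mul, coeff_X_pow, coeff_X, coeff_one] <;>
      norm_num <;> omega
  · -- the root r0 and Perron property
    set F : ℝ → ℝ := fun t => ((v2222:ℝ)-1)*t^6 + ((v2222:ℝ)+f-5)*t^5 + ((v2222:ℝ)+f-5)*t^4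
          + ((v2222:ℝ)+f-5)*t^3 + ((v2222:ℝ)+f-5)*t^2 + ((f:ℝ)-5)*t - 1 with hF
    have hcont : ContinuousOn F (Set.Icc (0:ℝ) 1) := by
      apply Continuous.continuousOn
      fun_prop
    have hmem : (0:ℝ) ∈ Set.Ioo (F 0) (F 1) := by
      constructor
      · simp [hF]
      · simp [hF]; nlinarith
    obtain ⟨r0, hr0mem, hFr0⟩ := intermediate_value_Ioo (by norm_num : (0:ℝ) ≤ 1) hcont hmem
    obtain ⟨h0, h1⟩ := hr0mem
    have hr : ((v2222:ℝ)-1)*r0^6 + ((v2222:ℝ)+f-5)*r0^5 + ((v2222:ℝ)+f-5)*r0^4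
        + ((v2222:ℝ)+f-5)*r0^3 + ((v2222:ℝ)+f-5)*r0^2 + ((f:ℝ)-5)*r0 - 1 = 0 := hFr0
    have hrne : r0 ≠ 0 := h0.ne'
    -- the minimality property for roots of H
    have hmin : ∀ z : ℂ, (((v2222:ℝ)-1 : ℝ):ℂ)*z^6 + (((v2222:ℝ)+f-5 : ℝ):ℂ)*z^5
        + (((v2222:ℝ)+f-5 : ℝ):ℂ)*z^4 + (((v2222:ℝ)+f-5 : ℝ):ℂ)*z^3
        + (((v2222:ℝ)+f-5 : ℝ):ℂ)*z^2 + (((f:ℝ)-5 : ℝ):ℂ)*z - 1 = 0 →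
        z ≠ (r0:ℂ) → r0 < ‖z‖ := by
      intro z hz hne
      exact h25_key ((v2222:ℝ)-1) ((v2222:ℝ)+f-5) ((f:ℝ)-5) ha hb hc r0 h0 hr z hz hne
    -- the companion polynomial vanishes at 1/r0
    have hPτ : eval₂ (algebraMap ℤ ℝ) (1/r0) (P25aux f v2222) = 0 := by
      rw [← aeval_def]
      unfold P25aux
      simp only [map_add, map_sub, map_mul, map_pow, aeval_C, aeval_X, map_one,
        algebraMap_int_eq, eq_intCast, map_natCast, map_ofNat]
      push_cast
      have key : (1/r0)^6 - (((f:ℝ)-5)*(1/r0)^5 + ((v2222:ℝ)+f-5)*((1/r0)^4+(1/r0)^3+(1/r0)^2+(1/r0)) + ((v2222:ℝ)-1))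
          = (-(1/r0)^6) * (((v2222:ℝ)-1)*r0^6 + ((v2222:ℝ)+f-5)*r0^5 + ((v2222:ℝ)+f-5)*r0^4
            + ((v2222:ℝ)+f-5)*r0^3 + ((v2222:ℝ)+f-5)*r0^2 + ((f:ℝ)-5)*r0 - 1) := by
        field_simp
        ring
      have := key.trans (by rw [hr, mul_zero])
      push_cast at this
      linear_combination this
    refine ⟨r0, h0, h1, ?_, ?_, ?_, ⟨P25aux f v2222, by unfold P25aux; monicity!, hPτ⟩, ?_⟩
    · -- aeval r0 H = 0
      simp only [map_add, map_sub, map_mul, map_pow, aeval_C, aeval_X, map_one,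
        algebraMap_int_eq, eq_intCast, map_natCast, map_ofNat]
      push_cast
      linear_combination hr
    · -- minimality among complex roots of H
      intro z hz hne
      apply hmin z ?_ hne
      simp only [map_add, map_sub, map_mul, map_pow, aeval_C, aeval_X, map_one,
        algebraMap_int_eq, eq_intCast, map_natCast, map_ofNat] at hz
      push_cast at hz ⊢
      linear_combination hz
    · -- 1 < 1/r0
      exact (one_lt_div h0).mpr h1
    · -- all other roots of the minimal polynomial of 1/r0 are smaller in modulus
      intro z hzmin hzneq
      have h1' : aeval ((1:ℝ)/r0) ((P25aux f v2222).map (algebraMap ℤ ℚ)) = 0 := by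
        rw [aeval_map_algebraMap, aeval_def, hPτ]
      obtain ⟨q, hq⟩ := minpoly.dvd ℚ (1/r0) h1'
      have hPz : aeval z ((P25aux f v2222).map (algebraMap ℤ ℚ)) = 0 := by
        rw [hq, map_mul, hzmin, zero_mul]
      rw [aeval_map_algebraMap] at hPz
      have hPzc : z^6 - ((((f:ℝ)-5 : ℝ):ℂ)*z^5 + (((v2222:ℝ)+f-5 : ℝ):ℂ)*(z^4+z^3+z^2+z)
          + (((v2222:ℝ)-1 : ℝ):ℂ)) = 0 := by
        unfold P25aux at hPz
        simp only [map_add, map_sub, map_mul, map_pow, aeval_C, aeval_X, map_one,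
          algebraMap_int_eq, eq_intCast, map_natCast, map_ofNat] at hPz
        push_cast at hPz ⊢
        linear_combination hPz
      by_cases hz0 : z = 0
      · subst hz0
        simp only [norm_zero]
        positivity
      · set w : ℂ := z⁻¹ with hwdef
        have hwz : z * w = 1 := mul_inv_cancel₀ hz0
        set aC : ℂ := (((v2222:ℝ)-1 : ℝ):ℂ)
        set bC : ℂ := (((v2222:ℝ)+f-5 : ℝ):ℂ)
        set cC : ℂ := (((f:ℝ)-5 : ℝ):ℂ)
        have hEw : aC*w^6 + bC*w^5 + bC*w^4 + bC*w^3 + bC*w^2 + cC*w - 1 = 0 := by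
          have h3 : (aC*w^6 + bC*w^5 + bC*w^4 + bC*w^3 + bC*w^2 + cC*w - 1) * z^6 = 0 := by
            linear_combination (aC*((z*w)^5+(z*w)^4+(z*w)^3+(z*w)^2+(z*w)+1)
              + bC*z*((z*w)^4+(z*w)^3+(z*w)^2+(z*w)+1)
              + bC*z^2*((z*w)^3+(z*w)^2+(z*w)+1)
              + bC*z^3*((z*w)^2+(z*w)+1)
              + bC*z^4*((z*w)+1)
              + cC*z^5) * hwz - hPzc
          exact (mul_eq_zero.mp h3).resolve_right (pow_ne_zero 6 hz0)
        by_cases hwr : w = (r0:ℂ)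
        · exfalso
          apply hzneq
          rw [← inv_inv z, ← hwdef, hwr]
          push_cast
          rw [one_div]
        · have hlt := hmin w hEw hwr
          rw [hwdef, norm_inv] at hlt
          have habspos : 0 < ‖z‖ := norm_pos_iff.mpr hz0
          have hinv : ‖z‖ * (‖z‖)⁻¹ = 1 := mul_inv_cancel₀ habspos.ne'
          rw [lt_div_iff₀ h0]
          nlinarith [mul_pos habspos (sub_pos.mpr hlt)]
end
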